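/- arXiv:2505.07221 — 3 statements merged into one kernel-verified Lean document; each statement's English description precedes it below -/
import Mathlib

section
/- Let k=(k_1,…,k_r) be an admissible index and let l=(k_{r+1},…,k_{r+s}) be a tuple of integers all ≥ 2. For d ∈ {0,…,min(r,s)}, let Σ_{r,s,d} be the set of surjections σ: {1,…,r+s} → {1,…,r+s−d} satisfying σ(1)<σ(2)<⋯<σ(r) and σ(r+1)<σ(r+2)<⋯<σ(r+s), and for σ ∈ Σ_{r,s,d} define k^σ_j = k_a if σ^{−1}({j})={a}, and k^σ_j = k_a+k_b if σ^{−1}({j})={a,b} with a≠b. Then for every positive integer N: ζ^◇_N(k)·ζ_N(l) = Σ_{d=0}^{min(r,s)} Σ_{σ∈Σ_{r,s,d}} ζ^◇_N(k^σ_1,…,k^σ_{r+s−d}). -/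
open scoped Classical

/-- The modified multiple harmonic sum `ζ◇_N(k)` for an index given as a tuple
`k : Fin r → ℕ` (0-based positions). -/
noncomputable def zdiaF (N : ℕ) {r : ℕ} (k : Fin r → ℕ) : ℚ :=
  ∑ A : Finset (Fin r),
    if ∀ i ∈ A, k i = 1 then
      ∑ n ∈ Finset.univ.filter (fun n : Fin r → Fin N =>
        (∀ i, 0 < (n i : ℕ)) ∧
        ∀ (i : Fin r) (h : (i : ℕ) + 1 < r),
          if i ∈ A then n i ≤ n ⟨(i : ℕ) + 1, h⟩ else n i < n ⟨(i : ℕ) + 1, h⟩),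
        ∏ i : Fin r,
          if i ∈ A then (1 : ℚ) / ((N : ℚ) - ((n i : ℕ) : ℚ))
          else (1 : ℚ) / (((n i : ℕ) : ℚ) ^ k i)
    else 0

/-- The multiple harmonic sum `ζ_N(k) = ∑_{0<n₁<⋯<n_r<N} 1/(n₁^{k₁}⋯n_r^{k_r})`. -/
noncomputable def mhsF (N : ℕ) {r : ℕ} (k : Fin r → ℕ) : ℚ :=
  ∑ n ∈ Finset.univ.filter (fun n : Fin r → Fin N =>
      (∀ i, 0 < (n i : ℕ)) ∧ StrictMono n),
    ∏ i : Fin r, (1 : ℚ) / (((n i : ℕ) : ℚ) ^ k i)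

section
open Finset

/-- monotonicity from consecutive steps -/
lemma mono_of_step {t : ℕ} {α : Type*} [Preorder α] {f : Fin t → α}
    (h : ∀ i : Fin t, ∀ hi : (i : ℕ) + 1 < t, f i ≤ f ⟨(i : ℕ) + 1, hi⟩) :
    Monotone f := by
  have key : ∀ q : ℕ, ∀ i j : Fin t, (j : ℕ) = (i : ℕ) + q → f i ≤ f j := by
    intro q
    induction q with
    | zero => intro i j hj; have : i = j := Fin.ext (by omega); rw [this]
    | succ q ih =>
      intro i j hj
      have hi : (i : ℕ) + 1 < t := by have := j.isLt; omega
      exact le_trans (h i hi) (ih ⟨(i : ℕ) + 1, hi⟩ j (by simp; omega))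
  intro i j hij
  exact key ((j : ℕ) - (i : ℕ)) i j (by have := (Fin.le_def.mp hij); omega)

lemma step_strict {t : ℕ} {α : Type*} [LinearOrder α] {f : Fin t → α} {A : Finset (Fin t)}
    (h : ∀ i : Fin t, ∀ hi : (i : ℕ) + 1 < t,
      if i ∈ A then f i ≤ f ⟨(i : ℕ) + 1, hi⟩ else f i < f ⟨(i : ℕ) + 1, hi⟩) :
    Monotone f ∧ ∀ i j : Fin t, i < j → i ∉ A → f i < f j := by
  have hmono : Monotone f := by
    apply mono_of_step
    intro i hi
    have := h i hi
    split at this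
    · exact this
    · exact le_of_lt this
  refine ⟨hmono, fun i j hij hiA => ?_⟩
  have hi : (i : ℕ) + 1 < t := by have := j.isLt; have := Fin.lt_def.mp hij; omega
  have h1 : f i < f ⟨(i : ℕ) + 1, hi⟩ := by have := h i hi; rwa [if_neg hiA] at this
  exact lt_of_lt_of_le h1 (hmono (by rw [Fin.le_def]; simp; omega : (⟨(i:ℕ)+1, hi⟩ : Fin t) ≤ j))

lemma eq_mem_of_step {t : ℕ} {α : Type*} [LinearOrder α] {f : Fin t → α} {A : Finset (Fin t)}
    (h : ∀ i : Fin t, ∀ hi : (i : ℕ) + 1 < t,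
      if i ∈ A then f i ≤ f ⟨(i : ℕ) + 1, hi⟩ else f i < f ⟨(i : ℕ) + 1, hi⟩) :
    ∀ i j : Fin t, i < j → f i = f j → i ∈ A := by
  intro i j hij hf
  by_contra hiA
  exact absurd hf (ne_of_lt ((step_strict h).2 i j hij hiA))

/-- a sum of positive naturals equal to 1 comes from a singleton -/
lemma singleton_of_sum_eq_one {ι : Type*} {T : Finset ι} {f : ι → ℕ}
    (h1 : ∀ a ∈ T, 1 ≤ f a) (hsum : ∑ a ∈ T, f a = 1) (hne : T.Nonempty) :
    ∃ a, T = {a} ∧ f a = 1 := by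
  have hcard : T.card ≤ 1 := by
    have := Finset.card_nsmul_le_sum T f 1 h1
    simpa [hsum] using this
  have hcard1 : T.card = 1 := le_antisymm hcard (Finset.card_pos.mpr hne)
  obtain ⟨a, ha⟩ := Finset.card_eq_one.mp hcard1
  refine ⟨a, ha, ?_⟩
  rw [ha, Finset.sum_singleton] at hsum
  exact hsum

lemma rank_eq {ι : Type*} [Fintype ι] {c : ℕ} {τ : ι → Fin c} (hsurj : Function.Surjective τ)
    (key : ι → ℕ)
    (h1 : ∀ a a', τ a = τ a' → key a = key a')
    (h2 : ∀ a a', τ a < τ a' → key a < key a') :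
    ∃ h : (Finset.univ.image key).card = c,
      ∀ a, (Finset.univ.image key).orderEmbOfFin h (τ a) = key a := by
  set κ : Fin c → ℕ := fun j => key (Function.surjInv hsurj j) with hκ
  have hκτ : ∀ a, κ (τ a) = key a := fun a =>
    h1 _ _ (Function.surjInv_eq hsurj (τ a))
  have hκmono : StrictMono κ := fun j j' hj =>
    h2 _ _ (by rw [Function.surjInv_eq hsurj, Function.surjInv_eq hsurj]; exact hj)
  have himg : Finset.univ.image key = Finset.univ.image κ := by
    ext x
    simp only [Finset.mem_image, Finset.mem_univ, true_and]
    constructor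
    · rintro ⟨a, rfl⟩; exact ⟨τ a, hκτ a⟩
    · rintro ⟨j, rfl⟩; exact ⟨Function.surjInv hsurj j, rfl⟩
  have hcard : (Finset.univ.image key).card = c := by
    rw [himg, Finset.card_image_of_injective _ hκmono.injective, Finset.card_univ,
      Fintype.card_fin]
  have hunique : κ = (Finset.univ.image key).orderEmbOfFin hcard := by
    apply Finset.orderEmbOfFin_unique hcard
    · intro j
      rw [himg]
      exact Finset.mem_image_of_mem _ (Finset.mem_univ _)
    · exact hκmono
  exact ⟨hcard, fun a => by rw [← hκτ a, hunique]⟩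

section Main

variable (N r s : ℕ) (k : Fin r → ℕ) (l : Fin s → ℕ)

def Lcond (x : Finset (Fin r) × (Fin r → Fin N) × (Fin s → Fin N)) : Prop :=
  (∀ i ∈ x.1, k i = 1) ∧
  ((∀ i, 0 < (x.2.1 i : ℕ)) ∧
    ∀ (i : Fin r) (h : (i : ℕ) + 1 < r),
      if i ∈ x.1 then x.2.1 i ≤ x.2.1 ⟨(i : ℕ) + 1, h⟩
      else x.2.1 i < x.2.1 ⟨(i : ℕ) + 1, h⟩) ∧
  ((∀ b, 0 < (x.2.2 b : ℕ)) ∧ StrictMono x.2.2)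

noncomputable def wL (x : Finset (Fin r) × (Fin r → Fin N) × (Fin s → Fin N)) : ℚ :=
  (∏ i : Fin r,
    if i ∈ x.1 then (1 : ℚ) / ((N : ℚ) - ((x.2.1 i : ℕ) : ℚ))
    else (1 : ℚ) / (((x.2.1 i : ℕ) : ℚ) ^ k i)) *
  ∏ b : Fin s, (1 : ℚ) / (((x.2.2 b : ℕ) : ℚ) ^ l b)

lemma lhs_flatten :
    zdiaF N k * mhsF N l = ∑ x ∈ Finset.univ.filter (Lcond N r s k), wL N r s k l x := by
  conv_rhs => rw [Finset.sum_filter, Fintype.sum_prod_type]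
  rw [zdiaF, mhsF, Finset.sum_mul]
  refine Finset.sum_congr rfl fun A _ => ?_
  conv_rhs => rw [Fintype.sum_prod_type]
  by_cases hP : ∀ i ∈ A, k i = 1
  · rw [if_pos hP]
    rw [Finset.sum_mul_sum]
    simp only [Finset.sum_filter]
    refine Finset.sum_congr rfl fun n _ => ?_
    by_cases hQ : (∀ i, 0 < (n i : ℕ)) ∧
        ∀ (i : Fin r) (h : (i : ℕ) + 1 < r),
          if i ∈ A then n i ≤ n ⟨(i : ℕ) + 1, h⟩ else n i < n ⟨(i : ℕ) + 1, h⟩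
    · rw [if_pos hQ]
      refine Finset.sum_congr rfl fun m _ => ?_
      by_cases hR : (∀ b, 0 < (m b : ℕ)) ∧ StrictMono m
      · rw [if_pos hR, if_pos ⟨hP, hQ, hR⟩]; rfl
      · rw [if_neg hR, if_neg (by rintro ⟨_, _, h⟩; exact hR h)]
    · rw [if_neg hQ]
      refine (Finset.sum_eq_zero fun m _ => ?_).symm
      rw [if_neg (by rintro ⟨_, h, _⟩; exact hQ h)]
  · rw [if_neg hP, zero_mul]
    refine (Finset.sum_eq_zero fun n _ => Finset.sum_eq_zero fun m _ => ?_).symm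
    rw [if_neg (by rintro ⟨h, _, _⟩; exact hP h)]

def ke (d : ℕ) (σ : Fin (r + s) → Fin (r + s - d)) (j : Fin (r + s - d)) : ℕ :=
  ∑ a ∈ Finset.univ.filter (fun a => σ a = j), Fin.append k l a

def Rcond (d : ℕ)
    (y : (Fin (r + s) → Fin (r + s - d)) × Finset (Fin (r + s - d)) × (Fin (r + s - d) → Fin N)) :
    Prop :=
  (Function.Surjective y.1 ∧ StrictMono (y.1 ∘ Fin.castAdd s) ∧ StrictMono (y.1 ∘ Fin.natAdd r)) ∧
  (∀ j ∈ y.2.1, ke r s k l d y.1 j = 1) ∧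
  ((∀ j, 0 < (y.2.2 j : ℕ)) ∧
    ∀ (j : Fin (r + s - d)) (h : (j : ℕ) + 1 < r + s - d),
      if j ∈ y.2.1 then y.2.2 j ≤ y.2.2 ⟨(j : ℕ) + 1, h⟩
      else y.2.2 j < y.2.2 ⟨(j : ℕ) + 1, h⟩)

noncomputable def wR (d : ℕ)
    (y : (Fin (r + s) → Fin (r + s - d)) × Finset (Fin (r + s - d)) × (Fin (r + s - d) → Fin N)) :
    ℚ :=
  ∏ j : Fin (r + s - d),
    if j ∈ y.2.1 then (1 : ℚ) / ((N : ℚ) - ((y.2.2 j : ℕ) : ℚ))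
    else (1 : ℚ) / (((y.2.2 j : ℕ) : ℚ) ^ ke r s k l d y.1 j)

lemma rhs_flatten (d : ℕ) :
    ∑ σ ∈ Finset.univ.filter (fun σ : Fin (r + s) → Fin (r + s - d) =>
        Function.Surjective σ ∧
        StrictMono (σ ∘ Fin.castAdd s) ∧ StrictMono (σ ∘ Fin.natAdd r)),
      zdiaF N (fun j => ∑ a ∈ Finset.univ.filter (fun a => σ a = j), Fin.append k l a) =
    ∑ y ∈ Finset.univ.filter (Rcond N r s k l d), wR N r s k l d y := by
  rw [Finset.sum_filter]
  conv_rhs => rw [Finset.sum_filter, Fintype.sum_prod_type]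
  refine Finset.sum_congr rfl fun σ _ => ?_
  conv_rhs => rw [Fintype.sum_prod_type]
  simp only [Rcond, wR, ke]
  by_cases hS : Function.Surjective σ ∧
      StrictMono (σ ∘ Fin.castAdd s) ∧ StrictMono (σ ∘ Fin.natAdd r)
  · rw [if_pos hS, zdiaF]
    refine Finset.sum_congr rfl fun B _ => ?_
    by_cases hB : ∀ j ∈ B,
        (∑ a ∈ Finset.univ.filter (fun a => σ a = j), Fin.append k l a) = 1
    · rw [if_pos hB]
      conv_lhs => rw [Finset.sum_filter]
      refine Finset.sum_congr rfl fun p _ => ?_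
      by_cases hp : (∀ j, 0 < (p j : ℕ)) ∧
          ∀ (j : Fin (r + s - d)) (h : (j : ℕ) + 1 < r + s - d),
            if j ∈ B then p j ≤ p ⟨(j : ℕ) + 1, h⟩ else p j < p ⟨(j : ℕ) + 1, h⟩
      · rw [if_pos hp, if_pos ⟨hS, hB, hp⟩]
      · rw [if_neg hp, if_neg (by rintro ⟨_, _, h⟩; exact hp h)]
    · rw [if_neg hB]
      refine (Finset.sum_eq_zero fun p _ => ?_).symm
      rw [if_neg (by rintro ⟨_, h, _⟩; exact hB h)]
  · rw [if_neg hS]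
    refine (Finset.sum_eq_zero fun B _ => Finset.sum_eq_zero fun p _ => ?_).symm
    rw [if_neg (by rintro ⟨h, _, _⟩; exact hS h)]

end Main


section Enc
variable {r : ℕ}

lemma enc_div {v c : ℕ} (hc : c ≤ r) : ((r + 1) * v + c) / (r + 1) = v := by
  rw [Nat.mul_add_div (by omega : 0 < r + 1), Nat.div_eq_of_lt (by omega : c < r + 1)]
  omega

lemma enc_mod {v c : ℕ} (hc : c ≤ r) : ((r + 1) * v + c) % (r + 1) = c := by
  rw [Nat.mul_add_mod, Nat.mod_eq_of_lt (by omega)]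

lemma enc_inj {v c v' c' : ℕ} (hc : c ≤ r) (hc' : c' ≤ r)
    (h : (r + 1) * v + c = (r + 1) * v' + c') : v = v' ∧ c = c' := by
  constructor
  · rw [← enc_div (v := v) hc, h, enc_div hc']
  · rw [← enc_mod (v := v) hc, h, enc_mod hc']

lemma enc_lt_left {v c v' c' : ℕ} (hc : c ≤ r) (hv : v < v') :
    (r + 1) * v + c < (r + 1) * v' + c' :=
  calc (r + 1) * v + c < (r + 1) * v + (r + 1) := by omega
    _ = (r + 1) * (v + 1) := by ring
    _ ≤ (r + 1) * v' := Nat.mul_le_mul_left _ hv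
    _ ≤ (r + 1) * v' + c' := Nat.le_add_right _ _

lemma enc_le_val {v c v' c' : ℕ} (hc : c ≤ r) (hc' : c' ≤ r)
    (h : (r + 1) * v + c < (r + 1) * v' + c') : v ≤ v' := by
  by_contra hvv
  push_neg at hvv
  exact absurd h (not_lt.mpr (le_of_lt (enc_lt_left hc' hvv)))

end Enc

section Rank
variable {ι : Type*} [Fintype ι] {c : ℕ}

noncomputable def rankOf (key : ι → ℕ) (h : (Finset.univ.image key).card = c) : ι → Fin c :=
  fun a => ((Finset.univ.image key).orderIsoOfFin h).symm
    ⟨key a, Finset.mem_image_of_mem key (Finset.mem_univ a)⟩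

lemma rankOf_emb (key : ι → ℕ) (h : (Finset.univ.image key).card = c) (a : ι) :
    (Finset.univ.image key).orderEmbOfFin h (rankOf key h a) = key a := by
  rw [← Finset.coe_orderIsoOfFin_apply, rankOf, OrderIso.apply_symm_apply]

lemma rankOf_lt_iff (key : ι → ℕ) (h : (Finset.univ.image key).card = c) {a a' : ι} :
    rankOf key h a < rankOf key h a' ↔ key a < key a' := by
  simp only [rankOf, OrderIso.lt_iff_lt, Subtype.mk_lt_mk]

lemma rankOf_eq_iff (key : ι → ℕ) (h : (Finset.univ.image key).card = c) {a a' : ι} :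
    rankOf key h a = rankOf key h a' ↔ key a = key a' := by
  simp only [rankOf, EquivLike.apply_eq_iff_eq, Subtype.mk.injEq]

lemma rankOf_surj (key : ι → ℕ) (h : (Finset.univ.image key).card = c) :
    Function.Surjective (rankOf key h) := by
  intro j
  have hmem := ((Finset.univ.image key).orderIsoOfFin h j).2
  rw [Finset.mem_image] at hmem
  obtain ⟨a, -, ha⟩ := hmem
  refine ⟨a, ?_⟩
  rw [rankOf, OrderIso.symm_apply_eq]
  exact Subtype.ext ha

lemma rankOf_canon {τ : ι → Fin c} (hsurj : Function.Surjective τ) {key : ι → ℕ}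
    (h1 : ∀ a a', τ a = τ a' → key a = key a')
    (h2 : ∀ a a', τ a < τ a' → key a < key a') :
    ∃ h : (Finset.univ.image key).card = c, ∀ a, rankOf key h a = τ a := by
  obtain ⟨hcard, hemb⟩ := rank_eq hsurj key h1 h2
  refine ⟨hcard, fun a => ?_⟩
  apply ((Finset.univ.image key).orderEmbOfFin hcard).injective
  rw [rankOf_emb, hemb]

end Rank

lemma addCases_surj {r s : ℕ} (a : Fin (r + s)) :
    (∃ i, a = Fin.castAdd s i) ∨ ∃ b, a = Fin.natAdd r b := by
  induction a using Fin.addCases with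
  | left i => exact Or.inl ⟨i, rfl⟩
  | right b => exact Or.inr ⟨b, rfl⟩

section Key

variable (N r s : ℕ)

def valF (n : Fin r → Fin N) (m : Fin s → Fin N) : Fin (r + s) → ℕ :=
  Fin.addCases (fun i => (n i : ℕ)) (fun b => (m b : ℕ))

def cF (A : Finset (Fin r)) : Fin (r + s) → ℕ :=
  Fin.addCases (fun i : Fin r => if i ∈ A then (i : ℕ) else r) (fun _ : Fin s => r)

def keyF (A : Finset (Fin r)) (n : Fin r → Fin N) (m : Fin s → Fin N) (a : Fin (r + s)) : ℕ :=
  (r + 1) * valF N r s n m a + cF r s A a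

@[simp] lemma valF_castAdd (n : Fin r → Fin N) (m : Fin s → Fin N) (i : Fin r) :
    valF N r s n m (Fin.castAdd s i) = (n i : ℕ) := by simp [valF]

@[simp] lemma valF_natAdd (n : Fin r → Fin N) (m : Fin s → Fin N) (b : Fin s) :
    valF N r s n m (Fin.natAdd r b) = (m b : ℕ) := by simp [valF]

@[simp] lemma cF_castAdd (A : Finset (Fin r)) (i : Fin r) :
    cF r s A (Fin.castAdd s i) = if i ∈ A then (i : ℕ) else r := by simp [cF]

@[simp] lemma cF_natAdd (A : Finset (Fin r)) (b : Fin s) :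
    cF r s A (Fin.natAdd r b) = r := by simp [cF]

lemma cF_le (A : Finset (Fin r)) (a : Fin (r + s)) : cF r s A a ≤ r := by
  rcases addCases_surj a with ⟨i, rfl⟩ | ⟨b, rfl⟩
  · simp only [cF_castAdd]
    split <;> omega
  · simp

lemma valF_lt (n : Fin r → Fin N) (m : Fin s → Fin N) (a : Fin (r + s)) :
    valF N r s n m a < N := by
  rcases addCases_surj a with ⟨i, rfl⟩ | ⟨b, rfl⟩
  · simpa using (n i).isLt
  · simpa using (m b).isLt

end Key


section Main2
variable (N r s : ℕ) (k : Fin r → ℕ) (l : Fin s → ℕ)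

noncomputable def Phi
    (z : Σ d : ℕ, (Fin (r + s) → Fin (r + s - d)) × Finset (Fin (r + s - d)) × (Fin (r + s - d) → Fin N)) :
    Finset (Fin r) × (Fin r → Fin N) × (Fin s → Fin N) :=
  (Finset.univ.filter (fun i => z.2.1 (Fin.castAdd s i) ∈ z.2.2.1),
   fun i => z.2.2.2 (z.2.1 (Fin.castAdd s i)),
   fun b => z.2.2.2 (z.2.1 (Fin.natAdd r b)))

lemma fiber_singleton (hk : ∀ i, 0 < k i) (hl : ∀ b, 2 ≤ l b) {c : ℕ}
    {σ : Fin (r + s) → Fin c} (hσ : Function.Surjective σ)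
    {B : Finset (Fin c)}
    (hB : ∀ j ∈ B, (∑ a ∈ Finset.univ.filter (fun a => σ a = j), Fin.append k l a) = 1) :
    ∀ j ∈ B, ∃ i : Fin r, (Finset.univ.filter fun a => σ a = j) = {Fin.castAdd s i} ∧
      k i = 1 ∧ σ (Fin.castAdd s i) = j := by
  intro j hj
  have hne : (Finset.univ.filter fun a => σ a = j).Nonempty := by
    obtain ⟨a, ha⟩ := hσ j
    exact ⟨a, by simp [ha]⟩
  have hpos : ∀ a ∈ (Finset.univ.filter fun a => σ a = j), 1 ≤ Fin.append k l a := by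
    intro a _
    rcases addCases_surj a with ⟨i, rfl⟩ | ⟨b, rfl⟩
    · rw [Fin.append_left]; exact hk i
    · rw [Fin.append_right]; have := hl b; omega
  obtain ⟨a0, hT, h1⟩ := singleton_of_sum_eq_one hpos (hB j hj) hne
  rcases addCases_surj a0 with ⟨i, rfl⟩ | ⟨b, rfl⟩
  · refine ⟨i, hT, by rwa [Fin.append_left] at h1, ?_⟩
    have : Fin.castAdd s i ∈ (Finset.univ.filter fun a => σ a = j) :=
      hT ▸ Finset.mem_singleton_self _
    simpa using this
  · exfalso; rw [Fin.append_right] at h1; have := hl b; omega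

lemma notB_natAdd (hk : ∀ i, 0 < k i) (hl : ∀ b, 2 ≤ l b) {c : ℕ}
    {σ : Fin (r + s) → Fin c} (hσ : Function.Surjective σ)
    {B : Finset (Fin c)}
    (hB : ∀ j ∈ B, (∑ a ∈ Finset.univ.filter (fun a => σ a = j), Fin.append k l a) = 1) :
    ∀ b, σ (Fin.natAdd r b) ∉ B := by
  intro b hb
  obtain ⟨i, hT, -, -⟩ := fiber_singleton r s k l hk hl hσ hB _ hb
  have hmem : Fin.natAdd r b ∈ (Finset.univ.filter fun a => σ a = σ (Fin.natAdd r b)) := by simp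
  rw [hT, Finset.mem_singleton] at hmem
  have := congrArg Fin.val hmem
  simp only [Fin.coe_natAdd, Fin.coe_castAdd] at this
  have := i.isLt
  omega

lemma phi_mapsTo (hk : ∀ i, 0 < k i) (hl : ∀ b, 2 ≤ l b) :
    ∀ z ∈ (Finset.range (min r s + 1)).sigma
        (fun d => Finset.univ.filter (Rcond N r s k l d)),
      Phi N r s z ∈ Finset.univ.filter (Lcond N r s k) := by
  rintro ⟨d, σ, B, p⟩ hz
  rw [Finset.mem_sigma, Finset.mem_filter] at hz
  obtain ⟨hd, -, hy⟩ := hz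
  unfold Rcond at hy
  obtain ⟨⟨hσ, hsm1, hsm2⟩, hBg, hppos, hpstep⟩ := hy
  have hpmono : Monotone p := (step_strict hpstep).1
  have hgap : ∀ j j' : Fin (r + s - d), j < j' → p j = p j' → j ∈ B := eq_mem_of_step hpstep
  have hstrict : ∀ j j' : Fin (r + s - d), j < j' → j ∉ B → p j < p j' := by
    intro j j' hjj hjB
    exact lt_of_le_of_ne (hpmono hjj.le) (fun he => hjB (hgap _ _ hjj he))
  rw [Finset.mem_filter]
  refine ⟨Finset.mem_univ _, ?_, ⟨?_, ?_⟩, ?_, ?_⟩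
  · -- ∀ i ∈ A, k i = 1
    intro i hi
    simp only [Phi, Finset.mem_filter, Finset.mem_univ, true_and] at hi
    obtain ⟨i₀, hT, hk1, -⟩ := fiber_singleton r s k l hk hl hσ hBg _ hi
    have hmem : Fin.castAdd s i ∈ (Finset.univ.filter fun a => σ a = σ (Fin.castAdd s i)) := by simp
    rw [hT, Finset.mem_singleton] at hmem
    have : i = i₀ := by
      have := congrArg Fin.val hmem
      simp only [Fin.coe_castAdd] at this
      exact Fin.ext this
    rwa [this]
  · exact fun i => hppos _
  · -- step condition for n
    intro i h
    have hlt : σ (Fin.castAdd s i) < σ (Fin.castAdd s ⟨(i : ℕ) + 1, h⟩) := by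
      have : (i : Fin r) < ⟨(i : ℕ) + 1, h⟩ := by rw [Fin.lt_def]; simp
      exact hsm1 this
    by_cases hiA : i ∈ (Phi N r s ⟨d, σ, B, p⟩).1
    · rw [if_pos hiA]
      exact hpmono hlt.le
    · rw [if_neg hiA]
      refine hstrict _ _ hlt ?_
      simp only [Phi, Finset.mem_filter, Finset.mem_univ, true_and] at hiA
      exact hiA
  · exact fun b => hppos _
  · -- StrictMono m
    intro b b' hbb
    exact hstrict _ _ (hsm2 hbb) (notB_natAdd r s k l hk hl hσ hBg b)

end Main2

section Main3
variable (N r s : ℕ) (k : Fin r → ℕ) (l : Fin s → ℕ)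

lemma phi_weight (hk : ∀ i, 0 < k i) (hl : ∀ b, 2 ≤ l b) :
    ∀ z ∈ (Finset.range (min r s + 1)).sigma
        (fun d => Finset.univ.filter (Rcond N r s k l d)),
      wR N r s k l z.1 z.2 = wL N r s k l (Phi N r s z) := by
  rintro ⟨d, σ, B, p⟩ hz
  rw [Finset.mem_sigma, Finset.mem_filter] at hz
  obtain ⟨hd, -, hy⟩ := hz
  unfold Rcond at hy
  obtain ⟨⟨hσ, hsm1, hsm2⟩, hBg, hppos, hpstep⟩ := hy
  dsimp only at hσ hsm1 hsm2 hBg hppos hpstep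
  set g : Fin (r + s) → ℚ := fun a =>
    if σ a ∈ B then (1 : ℚ) / ((N : ℚ) - ((p (σ a) : ℕ) : ℚ))
    else (1 : ℚ) / (((p (σ a) : ℕ) : ℚ) ^ Fin.append k l a) with hg
  have step2 : ∀ j : Fin (r + s - d),
      (∏ a ∈ Finset.univ.filter (fun a => σ a = j), g a) =
      (if j ∈ B then (1 : ℚ) / ((N : ℚ) - ((p j : ℕ) : ℚ))
        else (1 : ℚ) / (((p j : ℕ) : ℚ) ^ ke r s k l d σ j)) := by
    intro j
    by_cases hj : j ∈ B
    · obtain ⟨i₀, hT, hk1, hσ₀⟩ := fiber_singleton r s k l hk hl hσ hBg _ hj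
      rw [hT, Finset.prod_singleton, if_pos hj, hg]
      simp only [hσ₀, if_pos hj]
    · rw [if_neg hj]
      calc (∏ a ∈ Finset.univ.filter (fun a => σ a = j), g a)
          = ∏ a ∈ Finset.univ.filter (fun a => σ a = j),
              (((p j : ℕ) : ℚ) ^ Fin.append k l a)⁻¹ := by
            refine Finset.prod_congr rfl fun a ha => ?_
            rw [Finset.mem_filter] at ha
            rw [hg]
            simp only [ha.2, if_neg hj, one_div]
        _ = ((∏ a ∈ Finset.univ.filter (fun a => σ a = j),
              ((p j : ℕ) : ℚ) ^ Fin.append k l a))⁻¹ := Finset.prod_inv_distrib _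
        _ = (((p j : ℕ) : ℚ) ^ ∑ a ∈ Finset.univ.filter (fun a => σ a = j),
              Fin.append k l a)⁻¹ := by
            rw [Finset.prod_pow_eq_pow_sum]
        _ = (1 : ℚ) / (((p j : ℕ) : ℚ) ^ ke r s k l d σ j) := by
            rw [one_div, ke]
  calc wR N r s k l d (σ, B, p)
      = ∏ j : Fin (r + s - d), ∏ a ∈ Finset.univ.filter (fun a => σ a = j), g a := by
        rw [wR]
        exact (Finset.prod_congr rfl fun j _ => step2 j).symm
    _ = ∏ a : Fin (r + s), g a :=
        Finset.prod_fiberwise_of_maps_to (fun a _ => Finset.mem_univ (σ a)) g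
    _ = wL N r s k l (Phi N r s ⟨d, σ, B, p⟩) := by
        rw [Fin.prod_univ_add, wL]
        congr 1
        · refine Finset.prod_congr rfl fun i _ => ?_
          rw [hg]
          simp only [Fin.append_left, Phi, Finset.mem_filter, Finset.mem_univ, true_and]
        · refine Finset.prod_congr rfl fun b _ => ?_
          rw [hg]
          simp only [Fin.append_right, Phi,
            if_neg (notB_natAdd r s k l hk hl hσ hBg b)]

end Main3

section Main4
variable (N r s : ℕ) (k : Fin r → ℕ) (l : Fin s → ℕ)

lemma canon (hk : ∀ i, 0 < k i) (hl : ∀ b, 2 ≤ l b) {d : ℕ}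
    {σ : Fin (r + s) → Fin (r + s - d)} {B : Finset (Fin (r + s - d))}
    {p : Fin (r + s - d) → Fin N}
    (hy : Rcond N r s k l d (σ, B, p)) :
    ∃ h : (Finset.univ.image (keyF N r s
        (Finset.univ.filter fun i => σ (Fin.castAdd s i) ∈ B)
        (fun i => p (σ (Fin.castAdd s i)))
        (fun b => p (σ (Fin.natAdd r b))))).card = r + s - d,
      ∀ a, rankOf _ h a = σ a := by
  unfold Rcond at hy
  obtain ⟨⟨hσ, hsm1, hsm2⟩, hBg, hppos, hpstep⟩ := hy
  dsimp only at hσ hsm1 hsm2 hBg hppos hpstep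
  set A : Finset (Fin r) := Finset.univ.filter fun i => σ (Fin.castAdd s i) ∈ B with hA
  set n : Fin r → Fin N := fun i => p (σ (Fin.castAdd s i)) with hn
  set m : Fin s → Fin N := fun b => p (σ (Fin.natAdd r b)) with hm
  set key : Fin (r + s) → ℕ := keyF N r s A n m with hkey
  have hpmono : Monotone p := (step_strict hpstep).1
  have hgap : ∀ j j' : Fin (r + s - d), j < j' → p j = p j' → j ∈ B := eq_mem_of_step hpstep
  have hval : ∀ a, valF N r s n m a = ((p (σ a)) : ℕ) := by
    intro a
    rcases addCases_surj a with ⟨i, rfl⟩ | ⟨b, rfl⟩ <;> simp [hn, hm]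
  have hiA : ∀ i : Fin r, i ∈ A ↔ σ (Fin.castAdd s i) ∈ B := by
    intro i; rw [hA]; simp
  have L1 : ∀ a a', σ a = σ a' → key a = key a' := by
    intro a a' he
    rcases addCases_surj a with ⟨i, rfl⟩ | ⟨b, rfl⟩ <;>
      rcases addCases_surj a' with ⟨i', rfl⟩ | ⟨b', rfl⟩
    · have : i = i' := hsm1.injective he
      rw [this]
    · -- castAdd, natAdd
      have hnotB : σ (Fin.castAdd s i) ∉ B := by
        rw [he]; exact notB_natAdd r s k l hk hl hσ hBg b'
      have hiA' : i ∉ A := fun h => hnotB ((hiA i).mp h)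
      rw [hkey, keyF, keyF, hval, hval, he]
      simp [hiA']
    · -- natAdd, castAdd
      have hnotB : σ (Fin.castAdd s i') ∉ B := by
        rw [← he]; exact notB_natAdd r s k l hk hl hσ hBg b
      have hiA' : i' ∉ A := fun h => hnotB ((hiA i').mp h)
      rw [hkey, keyF, keyF, hval, hval, he]
      simp [hiA']
    · have : b = b' := hsm2.injective he
      rw [this]
  have L2 : ∀ a a', σ a < σ a' → key a < key a' := by
    intro a a' hlt
    have hle : p (σ a) ≤ p (σ a') := hpmono hlt.le
    rcases lt_or_eq_of_le hle with hv | hv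
    · rw [hkey, keyF, keyF, hval, hval]
      exact enc_lt_left (cF_le r s A a) hv
    · have hjB : σ a ∈ B := hgap _ _ hlt hv
      obtain ⟨i₀, hT, hk1, hσ₀⟩ := fiber_singleton r s k l hk hl hσ hBg _ hjB
      have ha : a = Fin.castAdd s i₀ := by
        have : a ∈ Finset.univ.filter (fun x => σ x = σ a) := by simp
        rw [hT, Finset.mem_singleton] at this
        exact this
      have hi₀A : i₀ ∈ A := (hiA i₀).mpr (by rw [hσ₀]; exact hjB)
      have hcf : cF r s A a = (i₀ : ℕ) := by rw [ha]; simp [hi₀A]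
      have hcf' : (i₀ : ℕ) < cF r s A a' := by
        rcases addCases_surj a' with ⟨i', rfl⟩ | ⟨b', rfl⟩
        · by_cases hi'A : i' ∈ A
          · have : i₀ < i' := by
              have := hlt
              rw [ha] at this
              exact hsm1.lt_iff_lt.mp this
            simp only [cF_castAdd, if_pos hi'A]
            exact this
          · simp only [cF_castAdd, if_neg hi'A]
            exact i₀.isLt
        · simp only [cF_natAdd]
          exact i₀.isLt
      have hveq : valF N r s n m a = valF N r s n m a' := by rw [hval, hval, hv]
      rw [hkey, keyF, keyF, hveq]
      exact Nat.add_lt_add_left (by omega) _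
  exact rankOf_canon hσ L1 L2

lemma phi_injOn (hk : ∀ i, 0 < k i) (hl : ∀ b, 2 ≤ l b) :
    Set.InjOn (Phi N r s)
      ((Finset.range (min r s + 1)).sigma
        (fun d => Finset.univ.filter (Rcond N r s k l d))) := by
  rintro ⟨d, σ, B, p⟩ hz ⟨d', σ', B', p'⟩ hz' heq
  rw [Finset.mem_coe, Finset.mem_sigma, Finset.mem_filter] at hz hz'
  obtain ⟨hd, -, hy⟩ := hz
  obtain ⟨hd', -, hy'⟩ := hz'
  rw [Finset.mem_range] at hd hd'
  have h1 : (Finset.univ.filter fun i => σ (Fin.castAdd s i) ∈ B) =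
      (Finset.univ.filter fun i => σ' (Fin.castAdd s i) ∈ B') := congrArg Prod.fst heq
  have h2 : (fun i => p (σ (Fin.castAdd s i))) = fun i => p' (σ' (Fin.castAdd s i)) :=
    congrArg (fun x => x.2.1) heq
  have h3 : (fun b => p (σ (Fin.natAdd r b))) = fun b => p' (σ' (Fin.natAdd r b)) :=
    congrArg (fun x => x.2.2) heq
  obtain ⟨hc, hrank⟩ := canon N r s k l hk hl hy
  have H' := canon N r s k l hk hl hy'
  rw [← h1, ← h2, ← h3] at H'
  obtain ⟨hc', hrank'⟩ := H'
  -- d = d'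
  have hdd : d = d' := by
    have hcc := hc.symm.trans hc'
    simp only at hcc hd hd'
    omega
  subst hdd
  -- σ = σ'
  have hσeq : σ = σ' := by
    funext a
    exact (hrank a).symm.trans (hrank' a)
  subst hσeq
  -- facts
  unfold Rcond at hy hy'
  obtain ⟨⟨hσ, hsm1, hsm2⟩, hBg, hppos, hpstep⟩ := hy
  obtain ⟨⟨hσ2, hsm1', hsm2'⟩, hBg', hppos', hpstep'⟩ := hy'
  dsimp only at hσ hBg hBg'
  -- p = p'
  have hpeq : p = p' := by
    funext j
    obtain ⟨a, rfl⟩ := hσ j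
    rcases addCases_surj a with ⟨i, rfl⟩ | ⟨b, rfl⟩
    · exact congrFun h2 i
    · exact congrFun h3 b
  subst hpeq
  -- B = B'
  have hBeq : B = B' := by
    ext j
    constructor
    · intro hj
      obtain ⟨i₀, -, -, hσ₀⟩ := fiber_singleton r s k l hk hl hσ hBg _ hj
      have : i₀ ∈ Finset.univ.filter fun i => σ (Fin.castAdd s i) ∈ B := by
        simp only [Finset.mem_filter, Finset.mem_univ, true_and]
        rw [hσ₀]; exact hj
      rw [h1] at this
      simp only [Finset.mem_filter, Finset.mem_univ, true_and] at this
      rwa [hσ₀] at this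
    · intro hj
      obtain ⟨i₀, -, -, hσ₀⟩ := fiber_singleton r s k l hk hl hσ hBg' _ hj
      have : i₀ ∈ Finset.univ.filter fun i => σ (Fin.castAdd s i) ∈ B' := by
        simp only [Finset.mem_filter, Finset.mem_univ, true_and]
        rw [hσ₀]; exact hj
      rw [← h1] at this
      simp only [Finset.mem_filter, Finset.mem_univ, true_and] at this
      rwa [hσ₀] at this
  rw [hBeq]

end Main4

section Main5
variable (N r s : ℕ) (k : Fin r → ℕ) (l : Fin s → ℕ)

lemma phi_surjOn (hk : ∀ i, 0 < k i) (hl : ∀ b, 2 ≤ l b) :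
    Set.SurjOn (Phi N r s)
      ((Finset.range (min r s + 1)).sigma
        (fun d => Finset.univ.filter (Rcond N r s k l d)))
      (Finset.univ.filter (Lcond N r s k)) := by
  rintro ⟨A, n, m⟩ hx
  rw [Finset.mem_coe, Finset.mem_filter] at hx
  obtain ⟨-, hx⟩ := hx
  unfold Lcond at hx
  obtain ⟨hA1, ⟨hnpos, hnstep⟩, hmpos, hmsm⟩ := hx
  dsimp only at hA1 hnpos hnstep hmpos hmsm
  have hnmono : Monotone n := (step_strict hnstep).1
  have hnmem : ∀ i j : Fin r, i < j → n i = n j → i ∈ A := eq_mem_of_step hnstep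
  set key : Fin (r + s) → ℕ := keyF N r s A n m with hkeydef
  have K1 : StrictMono fun i : Fin r => key (Fin.castAdd s i) := by
    intro i i' hii
    have hle : n i ≤ n i' := hnmono hii.le
    rcases lt_or_eq_of_le hle with hv | hv
    · simp only [hkeydef, keyF, valF_castAdd]
      exact enc_lt_left (by simpa using cF_le r s A (Fin.castAdd s i)) hv
    · have hiA : i ∈ A := hnmem i i' hii hv
      simp only [hkeydef, keyF, valF_castAdd, cF_castAdd, if_pos hiA]
      rw [← hv]
      have hlt : (i : ℕ) < (if i' ∈ A then (i' : ℕ) else r) := by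
        split
        · exact hii
        · exact i.isLt
      exact Nat.add_lt_add_left hlt _
  have K2 : StrictMono fun b : Fin s => key (Fin.natAdd r b) := by
    intro b b' hbb
    simp only [hkeydef, keyF, valF_natAdd]
    exact enc_lt_left (by simpa using cF_le r s A (Fin.natAdd r b)) (hmsm hbb)
  set C := (Finset.univ.image key).card with hC
  have hCub : C ≤ r + s := by
    rw [hC]
    exact le_trans Finset.card_image_le (by simp)
  have hCr : r ≤ C := by
    have hsub : (Finset.univ.image fun i : Fin r => key (Fin.castAdd s i)) ⊆
        Finset.univ.image key := by
      intro x hx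
      rw [Finset.mem_image] at hx ⊢
      obtain ⟨i, -, hi⟩ := hx
      exact ⟨_, Finset.mem_univ _, hi⟩
    have hcard : (Finset.univ.image fun i : Fin r => key (Fin.castAdd s i)).card = r := by
      rw [Finset.card_image_of_injective _ K1.injective, Finset.card_univ, Fintype.card_fin]
    calc r = _ := hcard.symm
      _ ≤ C := Finset.card_le_card hsub
  have hCs : s ≤ C := by
    have hsub : (Finset.univ.image fun b : Fin s => key (Fin.natAdd r b)) ⊆
        Finset.univ.image key := by
      intro x hx
      rw [Finset.mem_image] at hx ⊢
      obtain ⟨b, -, hb⟩ := hx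
      exact ⟨_, Finset.mem_univ _, hb⟩
    have hcard : (Finset.univ.image fun b : Fin s => key (Fin.natAdd r b)).card = s := by
      rw [Finset.card_image_of_injective _ K2.injective, Finset.card_univ, Fintype.card_fin]
    calc s = _ := hcard.symm
      _ ≤ C := Finset.card_le_card hsub
  set d := r + s - C with hdd
  have hcd : (Finset.univ.image key).card = r + s - d := by
    rw [hdd, ← hC]
    omega
  set σ : Fin (r + s) → Fin (r + s - d) := rankOf key hcd with hσdef
  set B : Finset (Fin (r + s - d)) := A.image (fun i => σ (Fin.castAdd s i)) with hBdef
  have hemb : ∀ a, ((Finset.univ.image key).orderEmbOfFin hcd (σ a) : ℕ) = key a :=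
    fun a => rankOf_emb key hcd a
  have hσsurj : Function.Surjective σ := rankOf_surj key hcd
  have hsm1 : StrictMono (σ ∘ Fin.castAdd s) :=
    fun i i' h => (rankOf_lt_iff key hcd).mpr (K1 h)
  have hsm2 : StrictMono (σ ∘ Fin.natAdd r) :=
    fun b b' h => (rankOf_lt_iff key hcd).mpr (K2 h)
  have hsurjel : ∀ j : Fin (r + s - d), ∃ a, σ a = j ∧
      ((Finset.univ.image key).orderEmbOfFin hcd j : ℕ) = key a := by
    intro j
    obtain ⟨a, ha⟩ := hσsurj j
    exact ⟨a, ha, by rw [← ha, hemb]⟩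
  have hpd : ∀ j : Fin (r + s - d),
      ((Finset.univ.image key).orderEmbOfFin hcd j : ℕ) / (r + 1) < N := by
    intro j
    obtain ⟨a, -, hea⟩ := hsurjel j
    rw [hea, hkeydef]; rw [keyF, enc_div (cF_le r s A a)]
    exact valF_lt N r s n m a
  set p : Fin (r + s - d) → Fin N :=
    fun j => ⟨((Finset.univ.image key).orderEmbOfFin hcd j : ℕ) / (r + 1), hpd j⟩ with hpdef
  have hpval : ∀ a, ((p (σ a)) : ℕ) = valF N r s n m a := by
    intro a
    rw [hpdef]
    show ((Finset.univ.image key).orderEmbOfFin hcd (σ a) : ℕ) / (r + 1) = _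
    rw [hemb a, hkeydef]; rw [keyF, enc_div (cF_le r s A a)]
  -- recovery of A
  have hArec : (Finset.univ.filter fun i => σ (Fin.castAdd s i) ∈ B) = A := by
    ext i
    simp only [Finset.mem_filter, Finset.mem_univ, true_and, hBdef, Finset.mem_image]
    constructor
    · rintro ⟨i₀, hi₀A, hi₀⟩
      have : i₀ = i := hsm1.injective hi₀
      rwa [← this]
    · intro hiA
      exact ⟨i, hiA, rfl⟩
  -- fibers over B are singletons
  have hfib : ∀ i ∈ A, (Finset.univ.filter fun a => σ a = σ (Fin.castAdd s i)) =
      {Fin.castAdd s i} := by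
    intro i hiA
    ext a
    simp only [Finset.mem_filter, Finset.mem_univ, true_and, Finset.mem_singleton]
    constructor
    · intro ha
      have hkeq : key a = key (Fin.castAdd s i) := by
        rw [← rankOf_eq_iff key hcd]
        exact ha
      rw [hkeydef] at hkeq; rw [keyF, keyF] at hkeq
      simp only [valF_castAdd, cF_castAdd, if_pos hiA] at hkeq
      obtain ⟨hv, hc⟩ := enc_inj (cF_le r s A a) i.isLt.le hkeq
      rcases addCases_surj a with ⟨i', rfl⟩ | ⟨b', rfl⟩
      · simp only [cF_castAdd] at hc
        by_cases hi'A : i' ∈ A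
        · rw [if_pos hi'A] at hc
          congr 1
          exact Fin.ext hc
        · rw [if_neg hi'A] at hc
          exact absurd hc.symm (Nat.ne_of_lt i.isLt)
      · simp only [cF_natAdd] at hc
        exact absurd hc.symm (Nat.ne_of_lt i.isLt)
    · rintro rfl
      rfl
  -- the sigma element works
  refine ⟨⟨d, (σ, B, p)⟩, ?_, ?_⟩
  · rw [Finset.mem_coe, Finset.mem_sigma, Finset.mem_filter, Finset.mem_range]
    have hdmin : d < min r s + 1 := by omega
    refine ⟨hdmin, Finset.mem_univ _, ?_⟩
    unfold Rcond
    refine ⟨⟨hσsurj, hsm1, hsm2⟩, ?_, ?_, ?_⟩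
    · -- guard
      intro j hj
      rw [hBdef] at hj
      rw [Finset.mem_image] at hj
      obtain ⟨i, hiA, rfl⟩ := hj
      show (∑ a ∈ Finset.univ.filter (fun a => σ a = σ (Fin.castAdd s i)),
        Fin.append k l a) = 1
      rw [hfib i hiA, Finset.sum_singleton, Fin.append_left]
      exact hA1 i hiA
    · -- positivity of p
      intro j
      obtain ⟨a, haσ, hea⟩ := hsurjel j
      show 0 < ((Finset.univ.image key).orderEmbOfFin hcd j : ℕ) / (r + 1)
      rw [hea, hkeydef]; rw [keyF, enc_div (cF_le r s A a)]
      rcases addCases_surj a with ⟨i, rfl⟩ | ⟨b, rfl⟩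
      · simpa using hnpos i
      · simpa using hmpos b
    · -- step condition for p
      intro j h
      obtain ⟨a, haσ, hea⟩ := hsurjel j
      obtain ⟨a', haσ', hea'⟩ := hsurjel ⟨(j : ℕ) + 1, h⟩
      have hkeylt : key a < key a' := by
        rw [← hea, ← hea']
        exact ((Finset.univ.image key).orderEmbOfFin hcd).strictMono
          (by rw [Fin.lt_def]; simp)
      have hstep2 := hkeylt
      rw [hkeydef] at hstep2; rw [keyF, keyF] at hstep2
      have hvle : valF N r s n m a ≤ valF N r s n m a' :=
        enc_le_val (cF_le r s A a) (cF_le r s A a') hstep2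
      have hpj : ((p j) : ℕ) = valF N r s n m a := by
        show ((Finset.univ.image key).orderEmbOfFin hcd j : ℕ) / (r + 1) = _
        rw [hea, hkeydef]; rw [keyF, enc_div (cF_le r s A a)]
      have hpj' : ((p ⟨(j : ℕ) + 1, h⟩) : ℕ) = valF N r s n m a' := by
        show ((Finset.univ.image key).orderEmbOfFin hcd ⟨(j : ℕ) + 1, h⟩ : ℕ) / (r + 1) = _
        rw [hea', hkeydef]; rw [keyF, enc_div (cF_le r s A a')]
      by_cases hj : j ∈ B
      · rw [if_pos hj]
        rw [Fin.le_def, hpj, hpj']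
        exact hvle
      · rw [if_neg hj]
        rw [Fin.lt_def, hpj, hpj']
        rcases lt_or_eq_of_le hvle with hv | hv
        · exact hv
        · exfalso
          rw [hv] at hstep2
          have hclt : cF r s A a < cF r s A a' := Nat.lt_of_add_lt_add_left hstep2
          have hcr : cF r s A a < r := lt_of_lt_of_le hclt (cF_le r s A a')
          rcases addCases_surj a with ⟨i, rfl⟩ | ⟨b, rfl⟩
          · simp only [cF_castAdd] at hcr
            by_cases hiA : i ∈ A
            · apply hj
              rw [hBdef, Finset.mem_image]
              exact ⟨i, hiA, haσ⟩
            · rw [if_neg hiA] at hcr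
              omega
          · simp only [cF_natAdd] at hcr
            omega
  · -- Phi of it is (A, n, m)
    show (Finset.univ.filter (fun i => σ (Fin.castAdd s i) ∈ B),
      fun i => p (σ (Fin.castAdd s i)), fun b => p (σ (Fin.natAdd r b))) = (A, n, m)
    refine Prod.ext hArec (Prod.ext ?_ ?_)
    · funext i
      apply Fin.ext
      rw [hpval]
      simp
    · funext b
      apply Fin.ext
      rw [hpval]
      simp

end Main5


end

/-- **Restricted harmonic product formula for `ζ◇`.**
For an admissible index `k` of depth `r` and an index `l` of depth `s` with all entries
`≥ 2`, and for every positive integer `N`: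
`ζ◇_N(k)·ζ_N(l) = ∑_{d=0}^{min(r,s)} ∑_{σ ∈ Σ_{r,s,d}} ζ◇_N(k^σ₁,…,k^σ_{r+s-d})`,
where `Σ_{r,s,d}` is the set of surjections `σ : Fin (r+s) → Fin (r+s-d)` which are
strictly increasing on the first `r` and on the last `s` positions, and
`k^σ_j = ∑_{σ a = j} (k ⊕ l) a`. -/
theorem zdia_harmonic_product (N : ℕ) (hN : 0 < N) (r s : ℕ) (hr : 0 < r)
    (k : Fin r → ℕ) (l : Fin s → ℕ)
    (hk : ∀ i, 0 < k i) (hkadm : ∀ i : Fin r, (i : ℕ) + 1 = r → 2 ≤ k i)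
    (hl : ∀ i, 2 ≤ l i) :
    zdiaF N k * mhsF N l =
      ∑ d ∈ Finset.range (min r s + 1),
        ∑ σ ∈ Finset.univ.filter (fun σ : Fin (r + s) → Fin (r + s - d) =>
            Function.Surjective σ ∧
            StrictMono (σ ∘ Fin.castAdd s) ∧ StrictMono (σ ∘ Fin.natAdd r)),
          zdiaF N (fun j => ∑ a ∈ Finset.univ.filter (fun a => σ a = j),
            Fin.append k l a) := by
  rw [lhs_flatten N r s k l]
  rw [Finset.sum_congr rfl (fun d _ => rhs_flatten N r s k l d), Finset.sum_sigma']
  exact (Finset.sum_nbij (Phi N r s) (phi_mapsTo N r s k l hk hl)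
    (phi_injOn N r s k l hk hl) (phi_surjOn N r s k l hk hl)
    (phi_weight N r s k l hk hl)).symm
end

section
/- For every positive integer N and every admissible index k=(k_1,…,k_r): ζ^◇⋆_N(k) = Σ_{A ⊂ [r]^1_k} Σ_{(n_1,…,n_r) ∈ S*_{r,N}(A)} (Π_{i∈A} 1/(N−n_i))·(Π_{i∉A} 1/n_i^{k_i}), where S*_{r,N}(A) is the set of tuples (n_1,…,n_r) ∈ {1,…,N−1}^r such that for each i ∈ {1,…,r−1}: n_i ≤ n_{i+1} if i ∈ A or i+1 ∉ A, and n_i < n_{i+1} if i ∉ A and i+1 ∈ A. -/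
set_option maxRecDepth 4000


open scoped Classical

/-- The modified multiple harmonic sum `ζ◇_N(k)` for an index given as a list. -/
noncomputable def zdiaL (N : ℕ) (k : List ℕ) : ℚ :=
  ∑ A : Finset (Fin k.length),
    if ∀ i ∈ A, k.get i = 1 then
      ∑ n ∈ Finset.univ.filter (fun n : Fin k.length → Fin N =>
        (∀ i, 0 < (n i : ℕ)) ∧
        ∀ (i : Fin k.length) (h : (i : ℕ) + 1 < k.length),
          if i ∈ A then n i ≤ n ⟨(i : ℕ) + 1, h⟩ else n i < n ⟨(i : ℕ) + 1, h⟩),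
        ∏ i : Fin k.length,
          if i ∈ A then (1 : ℚ) / ((N : ℚ) - ((n i : ℕ) : ℚ))
          else (1 : ℚ) / (((n i : ℕ) : ℚ) ^ k.get i)
    else 0

/-- The finite set of coarsenings of an index `k`: all indices `l ⪯ k` obtained by
partitioning `k` into consecutive blocks and summing each block. -/
def coarsenings : List ℕ → Finset (List ℕ)
  | [] => {[]}
  | a :: k =>
      (coarsenings k).image (fun l => a :: l) ∪
      (coarsenings k).image (fun l => match l with
        | [] => [a]
        | c :: t => (a + c) :: t)

namespace ZD

noncomputable def W (N : ℕ) (a : ℕ) (b : Bool) (m : ℕ) : ℚ :=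
  if 0 < m then (if b then (if a = 1 then 1/((N:ℚ) - m) else 0) else 1/(m:ℚ)^a) else 0

def toS {N : ℕ} (x : Bool × Fin N) : Bool × ℕ := (x.1, (x.2 : ℕ))

def cdia (s x : Bool × ℕ) : Prop := if s.1 then s.2 ≤ x.2 else s.2 < x.2
def cstar (s x : Bool × ℕ) : Prop := if s.1 ∨ ¬ x.1 then s.2 ≤ x.2 else s.2 < x.2

lemma cdia_zero : ∀ x : Bool × ℕ, cdia (true, 0) x := by intro x; simp [cdia]
lemma cstar_zero : ∀ x : Bool × ℕ, cstar (true, 0) x := by intro x; simp [cstar]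

noncomputable def recS (N : ℕ) (c : Bool × ℕ → Bool × ℕ → Prop) : List ℕ → Bool × ℕ → ℚ
  | [], _ => 1
  | a :: t, s => ∑ x : Bool × Fin N,
      if c s (toS x) then W N a x.1 (x.2 : ℕ) * recS N c t (toS x) else 0

noncomputable def χ {α : Type*} (A : Finset α) (i : α) : Bool := if i ∈ A then true else false

@[simp] lemma χ_true {α : Type*} (A : Finset α) (i : α) : χ A i = true ↔ i ∈ A := by
  simp [χ]

def Cond {N : ℕ} (c : Bool × ℕ → Bool × ℕ → Prop) (k : List ℕ) (s : Bool × ℕ)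
    (g : Fin k.length → Bool × Fin N) : Prop :=
  (∀ h : 0 < k.length, c s (toS (g ⟨0, h⟩))) ∧
    ∀ (i : Fin k.length) (h : (i : ℕ) + 1 < k.length),
      c (toS (g i)) (toS (g ⟨(i : ℕ) + 1, h⟩))

noncomputable def funForm (N : ℕ) (c : Bool × ℕ → Bool × ℕ → Prop) (k : List ℕ) (s : Bool × ℕ) : ℚ :=
  ∑ g : Fin k.length → Bool × Fin N,
    if Cond c k s g then ∏ i, W N (k.get i) (g i).1 ((g i).2 : ℕ) else 0

/-- chain-only condition, parameterized by a Bool function -/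
def Chain {N : ℕ} (c : Bool × ℕ → Bool × ℕ → Prop) (k : List ℕ)
    (s : Fin k.length → Bool) (n : Fin k.length → Fin N) : Prop :=
  ∀ (i : Fin k.length) (h : (i : ℕ) + 1 < k.length),
    c (s i, (n i : ℕ)) (s ⟨(i : ℕ) + 1, h⟩, (n ⟨(i : ℕ) + 1, h⟩ : ℕ))

/-- the theorem-shaped sum -/
noncomputable def thmForm (N : ℕ) (c : Bool × ℕ → Bool × ℕ → Prop) (k : List ℕ) : ℚ :=
  ∑ A : Finset (Fin k.length),
    if ∀ i ∈ A, k.get i = 1 then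
      ∑ n ∈ Finset.univ.filter (fun n : Fin k.length → Fin N =>
        (∀ i, 0 < (n i : ℕ)) ∧ Chain c k (χ A) n),
        ∏ i : Fin k.length,
          if i ∈ A then (1 : ℚ) / ((N : ℚ) - ((n i : ℕ) : ℚ))
          else (1 : ℚ) / (((n i : ℕ) : ℚ) ^ k.get i)
    else 0

noncomputable def finsetBoolEquiv (α : Type*) [DecidableEq α] [Fintype α] : Finset α ≃ (α → Bool) where
  toFun A := χ A
  invFun s := Finset.univ.filter (fun i => s i = true)
  left_inv A := by ext i; simp [χ]
  right_inv s := by funext i; rcases h : s i <;> simp [χ, h]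

lemma sum_finset_boolfun {α : Type*} [DecidableEq α] [Fintype α] (f : (α → Bool) → ℚ) :
    ∑ A : Finset α, f (χ A) = ∑ s : α → Bool, f s :=
  Fintype.sum_equiv (finsetBoolEquiv α) _ _ (fun _ => rfl)

set_option maxHeartbeats 1000000 in
lemma thmForm_eq_funForm (N : ℕ) (c : Bool × ℕ → Bool × ℕ → Prop)
    (hc0 : ∀ x : Bool × ℕ, c (true, 0) x) (k : List ℕ) :
    thmForm N c k = funForm N c k (true, 0) := by
  have step1 : ∀ A : Finset (Fin k.length),
      (if ∀ i ∈ A, k.get i = 1 then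
        ∑ n ∈ Finset.univ.filter (fun n : Fin k.length → Fin N =>
          (∀ i, 0 < (n i : ℕ)) ∧ Chain c k (χ A) n),
          ∏ i : Fin k.length,
            if i ∈ A then (1 : ℚ) / ((N : ℚ) - ((n i : ℕ) : ℚ))
            else (1 : ℚ) / (((n i : ℕ) : ℚ) ^ k.get i)
      else 0)
      = ∑ n : Fin k.length → Fin N,
          if Chain c k (χ A) n then ∏ i, W N (k.get i) (χ A i) ((n i : ℕ)) else 0 := by
    intro A
    simp only [List.get_eq_getElem]
    by_cases hok : ∀ i ∈ A, k[(i:ℕ)] = 1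
    · rw [if_pos hok, Finset.sum_filter]
      refine Finset.sum_congr rfl fun n _ => ?_
      by_cases hch : Chain c k (χ A) n
      · by_cases hpos : ∀ i, 0 < (n i : ℕ)
        · rw [if_pos ⟨hpos, hch⟩, if_pos hch]
          refine Finset.prod_congr rfl fun i _ => ?_
          by_cases hiA : i ∈ A
          · simp [W, hpos i, hiA, χ, hok i hiA]
          · simp [W, hpos i, hiA, χ]
        · rw [if_neg (fun hh => hpos hh.1), if_pos hch]
          push_neg at hpos
          obtain ⟨i0, hi0⟩ := hpos
          exact (Finset.prod_eq_zero (Finset.mem_univ i0) (by simp [W, Nat.le_zero.mp hi0])).symm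
      · rw [if_neg (fun hh => hch hh.2), if_neg hch]
    · rw [if_neg hok]
      obtain ⟨i0, hi0A, hi0⟩ := by push_neg at hok; exact hok
      symm
      refine Finset.sum_eq_zero fun n _ => ?_
      by_cases hch : Chain c k (χ A) n
      · rw [if_pos hch]
        refine Finset.prod_eq_zero (Finset.mem_univ i0) ?_
        simp only [W]
        have hχ : χ A i0 = true := by simp [hi0A]
        simp only [hχ, List.get_eq_getElem] at *
        simp [hi0]
      · rw [if_neg hch]
  rw [thmForm]
  rw [Finset.sum_congr rfl (fun A _ => step1 A)]
  rw [sum_finset_boolfun (fun s => ∑ n : Fin k.length → Fin N,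
    if Chain c k s n then ∏ i, W N (k.get i) (s i) ((n i : ℕ)) else 0)]
  rw [funForm]
  refine Eq.trans (Eq.symm (Fintype.sum_prod_type
    (fun p : (Fin k.length → Bool) × (Fin k.length → Fin N) =>
      if Chain c k p.1 p.2 then ∏ i, W N (k.get i) (p.1 i) ((p.2 i : ℕ)) else 0))) ?_
  refine Eq.trans (Equiv.sum_comp (Equiv.arrowProdEquivProdArrow (Fin k.length) (fun _ => Bool) (fun _ => Fin N))
    (fun p : (Fin k.length → Bool) × (Fin k.length → Fin N) =>
      if Chain c k p.1 p.2 then ∏ i, W N (k.get i) (p.1 i) ((p.2 i : ℕ)) else 0)).symm ?_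
  refine Finset.sum_congr rfl fun g _ => ?_
  exact if_congr ⟨fun hch => ⟨fun _ => hc0 _, fun i h => hch i h⟩,
    fun hcd i h => hcd.2 i h⟩ rfl rfl


lemma cond_cons {N : ℕ} (c : Bool × ℕ → Bool × ℕ → Prop) (a : ℕ) (t : List ℕ) (s : Bool × ℕ)
    (x : Bool × Fin N) (g' : Fin t.length → Bool × Fin N) :
    Cond c (a :: t) s (Fin.cons x g') ↔ c s (toS x) ∧ Cond c t (toS x) g' := by
  constructor
  · rintro ⟨H0, Hc⟩
    refine ⟨H0 (Nat.succ_pos _), ?_, ?_⟩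
    · intro h
      exact Hc ⟨0, Nat.succ_pos _⟩ (Nat.succ_lt_succ h)
    · intro j h
      exact Hc ⟨(j : ℕ) + 1, Nat.succ_lt_succ j.2⟩ (Nat.succ_lt_succ h)
  · rintro ⟨hx, H0, Hc⟩
    refine ⟨fun _ => hx, ?_⟩
    rintro ⟨iv, hi⟩ h
    cases iv with
    | zero => exact H0 (Nat.lt_of_succ_lt_succ h)
    | succ j => exact Hc ⟨j, Nat.lt_of_succ_lt_succ hi⟩ (Nat.lt_of_succ_lt_succ h)

lemma recS_eq_funForm (N : ℕ) (c : Bool × ℕ → Bool × ℕ → Prop) (k : List ℕ) (s : Bool × ℕ) :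
    recS N c k s = funForm N c k s := by
  induction k generalizing s with
  | nil =>
    simp [recS, funForm, Cond]
  | cons a t ih =>
    unfold funForm
    refine Eq.trans ?_ (Equiv.sum_comp (Fin.consEquiv fun _ => (Bool × Fin N)) _)
    rw [Fintype.sum_prod_type, recS]
    simp only [Fin.consEquiv_apply]
    refine Finset.sum_congr rfl fun x _ => ?_
    by_cases hc : c s (toS x)
    · simp only [hc, if_true, ih, funForm, Finset.mul_sum]
      refine Finset.sum_congr rfl fun g' _ => ?_
      have hcc := cond_cons c a t s x g'
      by_cases hq : Cond c t (toS x) g'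
      · rw [if_pos (show Cond c (a :: t) s ((Fin.consEquiv fun _ => Bool × Fin N) (x, g')) from hcc.mpr ⟨hc, hq⟩), if_pos hq]
        have hsp : ∀ f : Fin (t.length+1) → ℚ,
            ∏ i : Fin ((a::t).length), f i = f 0 * ∏ i : Fin t.length, f i.succ :=
          fun f => Fin.prod_univ_succ f
        rw [hsp]
        simp [Fin.cons_zero, Fin.cons_succ]
      · rw [if_neg (show ¬ Cond c (a :: t) s ((Fin.consEquiv fun _ => Bool × Fin N) (x, g')) from fun hh => hq (hcc.mp hh).2), if_neg hq, mul_zero]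
    · simp only [hc, if_false]
      refine (Finset.sum_eq_zero fun g' _ => ?_).symm
      exact if_neg (fun hh => hc ((cond_cons c a t s x g').mp hh).1)



def mg (a : ℕ) : List ℕ → List ℕ
  | [] => [a]
  | c :: t => (a + c) :: t

lemma coarsenings_cons (a : ℕ) (t : List ℕ) :
    coarsenings (a :: t) =
      (coarsenings t).image (fun l => a :: l) ∪ (coarsenings t).image (mg a) := by
  rw [coarsenings]
  congr 1

lemma coarsenings_ne_nil {k : List ℕ} (hk : k ≠ []) :
    ∀ l ∈ coarsenings k, l ≠ [] := by
  cases k with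
  | nil => exact absurd rfl hk
  | cons a t =>
    intro l hl
    rw [coarsenings_cons] at hl
    rcases Finset.mem_union.mp hl with h | h <;>
      obtain ⟨l', _, rfl⟩ := Finset.mem_image.mp h
    · simp
    · cases l' <;> simp [mg]

lemma coarsenings_pos {k : List ℕ} (hk : ∀ x ∈ k, 0 < x) :
    ∀ l ∈ coarsenings k, ∀ x ∈ l, 0 < x := by
  induction k with
  | nil => intro l hl; simp [coarsenings] at hl; subst hl; simp
  | cons a t ih =>
    intro l hl
    rw [coarsenings_cons] at hl
    have ha : 0 < a := hk a (by simp)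
    have ht : ∀ x ∈ t, 0 < x := fun x hx => hk x (by simp [hx])
    rcases Finset.mem_union.mp hl with h | h <;>
      obtain ⟨l', hl', rfl⟩ := Finset.mem_image.mp h
    · intro x hx
      rcases List.mem_cons.mp hx with rfl | hx
      · exact ha
      · exact ih ht l' hl' x hx
    · cases l' with
      | nil => intro x hx; simp [mg] at hx; subst hx; exact ha
      | cons c t' =>
        intro x hx
        rcases List.mem_cons.mp hx with rfl | hx
        · have : 0 < c := ih ht _ hl' c (by simp)
          omega
        · exact ih ht _ hl' x (by simp [hx])

lemma sum_coarsenings_cons (a : ℕ) (t : List ℕ) (ht : t ≠ [])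
    (hpos : ∀ x ∈ t, 0 < x) (f : List ℕ → ℚ) :
    ∑ l ∈ coarsenings (a :: t), f l =
      (∑ l ∈ coarsenings t, f (a :: l)) + ∑ l ∈ coarsenings t, f (mg a l) := by
  rw [coarsenings_cons, Finset.sum_union, Finset.sum_image, Finset.sum_image]
  · -- injectivity of mg a on coarsenings t
    intro l1 h1 l2 h2 heq
    cases l1 with
    | nil => exact absurd rfl (coarsenings_ne_nil ht _ h1)
    | cons c1 t1 =>
      cases l2 with
      | nil => exact absurd rfl (coarsenings_ne_nil ht _ h2)
      | cons c2 t2 =>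
        simp [mg] at heq
        obtain ⟨h, rfl⟩ := heq
        have : c1 = c2 := by omega
        subst this; rfl
  · intro l1 _ l2 _ heq; simpa using heq
  · -- disjointness
    rw [Finset.disjoint_left]
    intro l hl1 hl2
    obtain ⟨l1, _, rfl⟩ := Finset.mem_image.mp hl1
    obtain ⟨l2, hl2', heq⟩ := Finset.mem_image.mp hl2
    cases l2 with
    | nil => exact absurd rfl (coarsenings_ne_nil ht _ hl2')
    | cons c2 t2 =>
      have hc2 : 0 < c2 := coarsenings_pos hpos _ hl2' c2 (by simp)
      simp [mg] at heq
      omega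

noncomputable def hd1 (N : ℕ) (m : ℕ) : List ℕ → ℚ
  | [] => 0
  | c :: t' => (1/(m:ℚ)^c) * recS N cdia t' (false, m)

noncomputable def D (N : ℕ) (k : List ℕ) (s : Bool × ℕ) : ℚ :=
  ∑ l ∈ coarsenings k, recS N cdia l s

noncomputable def Mm (N : ℕ) (k : List ℕ) (m : ℕ) : ℚ :=
  ∑ l ∈ coarsenings k, hd1 N m l

lemma Mm_nil (N m : ℕ) : Mm N [] m = 0 := by simp [Mm, coarsenings, hd1]
lemma D_nil (N : ℕ) (s : Bool × ℕ) : D N [] s = 1 := by simp [D, coarsenings, recS]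

lemma Mm_cons (N : ℕ) (a : ℕ) (t : List ℕ) (hpos : ∀ x ∈ t, 0 < x) (m : ℕ) :
    Mm N (a :: t) m = (1/(m:ℚ)^a) * (D N t (false, m) + Mm N t m) := by
  cases t with
  | nil =>
    simp [Mm, D, coarsenings, recS, hd1, mg]
  | cons b u =>
    rw [Mm, sum_coarsenings_cons a _ (by simp) hpos]
    have h1 : ∑ l ∈ coarsenings (b :: u), hd1 N m (a :: l)
        = (1/(m:ℚ)^a) * D N (b :: u) (false, m) := by
      rw [D, Finset.mul_sum]
      exact Finset.sum_congr rfl fun l _ => rfl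
    have h2 : ∑ l ∈ coarsenings (b :: u), hd1 N m (mg a l)
        = (1/(m:ℚ)^a) * Mm N (b :: u) m := by
      rw [Mm, Finset.mul_sum]
      refine Finset.sum_congr rfl fun l hl => ?_
      cases l with
      | nil => exact absurd rfl (coarsenings_ne_nil (by simp) _ hl)
      | cons c t' =>
        show (1/(m:ℚ)^(a+c)) * recS N cdia t' (false, m)
          = (1/(m:ℚ)^a) * ((1/(m:ℚ)^c) * recS N cdia t' (false, m))
        rw [pow_add]; ring
    rw [h1, h2, mul_add]

lemma D_cons (N : ℕ) (a : ℕ) (t : List ℕ) (ha : 0 < a) (hpos : ∀ x ∈ t, 0 < x)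
    (s : Bool × ℕ) :
    D N (a :: t) s = ∑ x : Bool × Fin N,
      if cdia s (toS x) then
        W N a x.1 (x.2 : ℕ) * D N t (toS x)
          + (if x.1 then 0 else W N a false (x.2 : ℕ) * Mm N t (x.2 : ℕ))
      else 0 := by
  cases t with
  | nil =>
    rw [D]
    simp only [coarsenings, Finset.image_singleton, Finset.union_idempotent,
      Finset.sum_singleton]
    rw [recS]
    refine Finset.sum_congr rfl fun x _ => ?_
    rw [D_nil, Mm_nil]
    by_cases h : cdia s (toS x) <;> simp [h, recS]
  | cons b u =>
    rw [D, sum_coarsenings_cons a _ (by simp) hpos]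
    have h1 : ∑ l ∈ coarsenings (b :: u), recS N cdia (a :: l) s
        = ∑ x : Bool × Fin N, if cdia s (toS x) then
            W N a x.1 (x.2 : ℕ) * D N (b :: u) (toS x) else 0 := by
      rw [show (∑ l ∈ coarsenings (b :: u), recS N cdia (a :: l) s)
          = ∑ l ∈ coarsenings (b :: u), ∑ x : Bool × Fin N,
            (if cdia s (toS x) then W N a x.1 (x.2:ℕ) * recS N cdia l (toS x) else 0)
          from Finset.sum_congr rfl fun l _ => by rw [recS]]
      rw [Finset.sum_comm]
      refine Finset.sum_congr rfl fun x _ => ?_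
      by_cases h : cdia s (toS x)
      · simp only [h, if_true, D, Finset.mul_sum]
      · simp [h]
    have h2 : ∑ l ∈ coarsenings (b :: u), recS N cdia (mg a l) s
        = ∑ x : Bool × Fin N, if cdia s (toS x) then
            (if x.1 then 0 else W N a false (x.2 : ℕ) * Mm N (b :: u) (x.2 : ℕ)) else 0 := by
      have key : ∀ l ∈ coarsenings (b :: u), recS N cdia (mg a l) s
          = ∑ x : Bool × Fin N, if cdia s (toS x) then
              (if x.1 then 0 else W N a false (x.2 : ℕ) * hd1 N (x.2 : ℕ) l) else 0 := by
        intro l hl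
        cases l with
        | nil => exact absurd rfl (coarsenings_ne_nil (by simp) _ hl)
        | cons c t' =>
          have hc : 0 < c := coarsenings_pos hpos _ hl c (by simp)
          show recS N cdia ((a + c) :: t') s = _
          rw [recS]
          refine Finset.sum_congr rfl fun x _ => ?_
          by_cases h : cdia s (toS x)
          · rw [if_pos h, if_pos h]
            rcases x with ⟨b', m'⟩
            cases b' with
            | true =>
              have : a + c ≠ 1 := by omega
              simp [W, this]
            | false =>
              show W N (a+c) false (m' : ℕ) * recS N cdia t' (false, (m':ℕ))
                = W N a false (m' : ℕ) * ((1/((m':ℕ):ℚ)^c) * recS N cdia t' (false, (m':ℕ)))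
              by_cases hm : 0 < (m' : ℕ)
              · simp only [W, if_pos hm, if_neg (Bool.false_ne_true)]
                rw [pow_add]; ring
              · simp [W, hm]
          · rw [if_neg h, if_neg h]
      rw [Finset.sum_congr rfl key, Finset.sum_comm]
      refine Finset.sum_congr rfl fun x _ => ?_
      by_cases h : cdia s (toS x)
      · simp only [h, if_true]
        by_cases hx : x.1
        · simp [hx]
        · simp only [hx, if_false, Mm, Finset.mul_sum]
          simp [Bool.not_eq_true] at hx
          simp [hx]
      · simp [h]
    rw [h1, h2, ← Finset.sum_add_distrib]
    refine Finset.sum_congr rfl fun x _ => ?_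
    by_cases h : cdia s (toS x) <;> simp [h]

lemma invariant (N : ℕ) (t : List ℕ) (hpos : ∀ x ∈ t, 0 < x) :
    (∀ p : ℕ, recS N cstar t (true, p) = D N t (true, p)) ∧
    (∀ m : ℕ, 0 < m → m < N →
      recS N cstar t (false, m) = D N t (false, m) + Mm N t m) := by
  induction t with
  | nil =>
    constructor
    · intro p; rw [recS, D_nil]
    · intro m _ _; rw [recS, D_nil, Mm_nil, add_zero]
  | cons a t ih =>
    have ha : 0 < a := hpos a (by simp)
    have hpt : ∀ x ∈ t, 0 < x := fun x hx => hpos x (by simp [hx])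
    obtain ⟨ih1, ih2⟩ := ih hpt
    have key : ∀ x : Bool × Fin N,
        W N a x.1 (x.2 : ℕ) * recS N cstar t (toS x)
        = W N a x.1 (x.2 : ℕ) * D N t (toS x)
          + (if x.1 then 0 else W N a false (x.2 : ℕ) * Mm N t (x.2 : ℕ)) := by
      rintro ⟨b, m⟩
      cases b with
      | true => simp only [toS, if_true, add_zero]; rw [ih1]
      | false =>
        simp only [toS, Bool.false_eq_true, if_false]
        by_cases hm : 0 < (m : ℕ)
        · rw [ih2 (m : ℕ) hm m.2, mul_add]
        · simp [W, hm]
    constructor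
    · -- part 1
      intro p
      rw [recS, D_cons N a t ha hpt]
      refine Finset.sum_congr rfl fun x _ => ?_
      have hcond : cstar (true, p) (toS x) ↔ cdia (true, p) (toS x) := by
        simp [cstar, cdia]
      by_cases h : cdia (true, p) (toS x)
      · rw [if_pos (hcond.mpr h), if_pos h, key]
      · rw [if_neg (fun hh => h (hcond.mp hh)), if_neg h]
    · -- part 2
      intro m0 hm0 hm0N
      rw [recS, D_cons N a t ha hpt]
      set x0 : Bool × Fin N := (false, ⟨m0, hm0N⟩) with hx0
      rw [← Finset.sum_erase_add Finset.univ
          (fun x : Bool × Fin N => if cdia (false, m0) (toS x) then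
            W N a x.1 (x.2 : ℕ) * D N t (toS x)
              + (if x.1 then 0 else W N a false (x.2 : ℕ) * Mm N t (x.2 : ℕ)) else 0)
          (Finset.mem_univ x0),
        ← Finset.sum_erase_add Finset.univ
          (fun x : Bool × Fin N => if cstar (false, m0) (toS x) then
            W N a x.1 (x.2 : ℕ) * recS N cstar t (toS x) else 0) (Finset.mem_univ x0)]
      have hmain : ∀ x ∈ Finset.univ.erase x0,
          (if cstar (false, m0) (toS x) then
            W N a x.1 (x.2 : ℕ) * recS N cstar t (toS x) else 0)
          = (if cdia (false, m0) (toS x) then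
              W N a x.1 (x.2 : ℕ) * D N t (toS x)
                + (if x.1 then 0 else W N a false (x.2 : ℕ) * Mm N t (x.2 : ℕ)) else 0) := by
        rintro ⟨b, m⟩ hx
        cases b with
        | true =>
          have hcond : cstar (false, m0) (toS (true, m)) ↔ cdia (false, m0) (toS (true, m)) := by
            simp [cstar, cdia, toS]
          by_cases h : cdia (false, m0) (toS (true, m))
          · rw [if_pos (hcond.mpr h), if_pos h, key]
          · rw [if_neg (fun hh => h (hcond.mp hh)), if_neg h]
        | false =>
          have hne : (m : ℕ) ≠ m0 := by
            intro hh
            apply Finset.ne_of_mem_erase hx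
            rw [hx0]
            ext
            · rfl
            · exact hh
          have hcond : cstar (false, m0) (toS (false, m)) ↔ cdia (false, m0) (toS (false, m)) := by
            simp only [cstar, cdia, toS]
            simp only [Bool.false_eq_true, false_or, not_false_iff, if_true, if_false]
            omega
          by_cases h : cdia (false, m0) (toS (false, m))
          · rw [if_pos (hcond.mpr h), if_pos h, key]
          · rw [if_neg (fun hh => h (hcond.mp hh)), if_neg h]
      rw [Finset.sum_congr rfl hmain]
      rw [add_assoc]
      congr 1
      -- the diagonal term
      have hc1 : cstar (false, m0) (toS x0) := by
        simp [cstar, toS, x0]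
      have hc2 : ¬ cdia (false, m0) (toS x0) := by
        simp [cdia, toS, x0]
      rw [if_pos hc1, if_neg hc2, zero_add]
      show W N a false m0 * recS N cstar t (false, m0) = _
      rw [ih2 m0 hm0 hm0N, W, if_pos hm0, if_neg (Bool.false_ne_true)]
      rw [Mm_cons N a t hpt m0]


lemma cdia_mem {N r : ℕ} (A : Finset (Fin r)) (n : Fin r → Fin N) (i j : Fin r) :
    (if i ∈ A then n i ≤ n j else n i < n j) ↔ cdia (χ A i, (n i : ℕ)) (χ A j, (n j : ℕ)) := by
  by_cases hiA : i ∈ A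
  · have hχ : χ A i = true := by simp [χ, hiA]
    rw [if_pos hiA, cdia]
    simp only [hχ, if_true]
    exact Fin.le_def
  · have hχ : χ A i = false := by simp [χ, hiA]
    rw [if_neg hiA, cdia]
    simp only [hχ, Bool.false_eq_true, if_false]
    exact Fin.lt_def

lemma cstar_mem {N r : ℕ} (A : Finset (Fin r)) (n : Fin r → Fin N) (i j : Fin r) :
    cstar (χ A i, (n i : ℕ)) (χ A j, (n j : ℕ)) ↔
      (if i ∉ A ∧ j ∈ A then n i < n j else n i ≤ n j) := by
  by_cases hiA : i ∈ A <;> by_cases hjA : j ∈ A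
  · rw [cstar, if_pos (Or.inl (by simp [χ, hiA])), if_neg (by simp [hiA])]
    exact Fin.le_def.symm
  · rw [cstar, if_pos (Or.inl (by simp [χ, hiA])), if_neg (by simp [hiA])]
    exact Fin.le_def.symm
  · rw [cstar, if_neg (by simp [χ, hiA, hjA]), if_pos ⟨hiA, hjA⟩]
    exact Fin.lt_def.symm
  · rw [cstar, if_pos (Or.inr (by simp [χ, hjA])), if_neg (by simp [hjA])]
    exact Fin.le_def.symm

lemma zdiaL_eq_thmForm (N : ℕ) (k : List ℕ) : zdiaL N k = thmForm N cdia k := by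
  rw [zdiaL, thmForm]
  refine Finset.sum_congr rfl fun A _ => ?_
  by_cases hok : ∀ i ∈ A, k.get i = 1
  · rw [if_pos hok, if_pos hok]
    congr 1
    apply Finset.filter_congr
    intro n _
    simp only [Chain]
    refine and_congr Iff.rfl (forall_congr' fun i => forall_congr' fun h => ?_)
    exact cdia_mem A n i ⟨(i : ℕ) + 1, h⟩
  · rw [if_neg hok, if_neg hok]

lemma star_thmForm (N : ℕ) (k : List ℕ) :
    thmForm N cstar k =
      ∑ A : Finset (Fin k.length),
        if ∀ i ∈ A, k.get i = 1 then
          ∑ n ∈ Finset.univ.filter (fun n : Fin k.length → Fin N =>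
            (∀ i, 0 < (n i : ℕ)) ∧
            ∀ (i : Fin k.length) (h : (i : ℕ) + 1 < k.length),
              if i ∉ A ∧ (⟨(i : ℕ) + 1, h⟩ : Fin k.length) ∈ A then
                n i < n ⟨(i : ℕ) + 1, h⟩
              else n i ≤ n ⟨(i : ℕ) + 1, h⟩),
            ∏ i : Fin k.length,
              if i ∈ A then (1 : ℚ) / ((N : ℚ) - ((n i : ℕ) : ℚ))
              else (1 : ℚ) / (((n i : ℕ) : ℚ) ^ k.get i)
        else 0 := by
  rw [thmForm]
  refine Finset.sum_congr rfl fun A _ => ?_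
  by_cases hok : ∀ i ∈ A, k.get i = 1
  · rw [if_pos hok, if_pos hok]
    congr 1
    apply Finset.filter_congr
    intro n _
    simp only [Chain]
    refine and_congr Iff.rfl (forall_congr' fun i => forall_congr' fun h => ?_)
    exact cstar_mem A n i ⟨(i : ℕ) + 1, h⟩
  · rw [if_neg hok, if_neg hok]

end ZD

/-- **Expression of the star value.**  For every positive integer `N` and every
admissible index `k`, the diamond star value `ζ◇⋆_N(k) = ∑_{l ⪯ k} ζ◇_N(l)` equals
`∑_{A ⊂ [r]¹_k} ∑_{(n₁,…,n_r) ∈ S⋆_{r,N}(A)} (∏_{i∈A} 1/(N-nᵢ))·(∏_{i∉A} 1/nᵢ^{kᵢ})`,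
where `S⋆_{r,N}(A)` consists of tuples in `{1,…,N-1}^r` with `nᵢ ≤ nᵢ₊₁` when
`i ∈ A` or `i+1 ∉ A`, and `nᵢ < nᵢ₊₁` when `i ∉ A` and `i+1 ∈ A`. -/

theorem zdia_star_expression (N : ℕ) (hN : 0 < N) (k : List ℕ)
    (hpos : ∀ x ∈ k, 0 < x) (hadm : ∃ m, k.getLast? = some m ∧ 2 ≤ m) :
    (∑ l ∈ coarsenings k, zdiaL N l) =
      ∑ A : Finset (Fin k.length),
        if ∀ i ∈ A, k.get i = 1 then
          ∑ n ∈ Finset.univ.filter (fun n : Fin k.length → Fin N =>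
            (∀ i, 0 < (n i : ℕ)) ∧
            ∀ (i : Fin k.length) (h : (i : ℕ) + 1 < k.length),
              if i ∉ A ∧ (⟨(i : ℕ) + 1, h⟩ : Fin k.length) ∈ A then
                n i < n ⟨(i : ℕ) + 1, h⟩
              else n i ≤ n ⟨(i : ℕ) + 1, h⟩),
            ∏ i : Fin k.length,
              if i ∈ A then (1 : ℚ) / ((N : ℚ) - ((n i : ℕ) : ℚ))
              else (1 : ℚ) / (((n i : ℕ) : ℚ) ^ k.get i)
        else 0 := by
  have hzd : ∀ l : List ℕ, zdiaL N l = ZD.recS N ZD.cdia l (true, 0) := by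
    intro l
    rw [ZD.zdiaL_eq_thmForm, ZD.thmForm_eq_funForm N ZD.cdia ZD.cdia_zero l,
      ZD.recS_eq_funForm]
  calc (∑ l ∈ coarsenings k, zdiaL N l)
      = ZD.D N k (true, 0) := Finset.sum_congr rfl fun l _ => hzd l
    _ = ZD.recS N ZD.cstar k (true, 0) := ((ZD.invariant N k hpos).1 0).symm
    _ = ZD.thmForm N ZD.cstar k := by
        rw [ZD.recS_eq_funForm, ZD.thmForm_eq_funForm N ZD.cstar ZD.cstar_zero k]
    _ = _ := ZD.star_thmForm N k
end

section
/- Let N be a positive integer, n ∈ {0,…,N−1}, and let z be an indeterminate. For p ≥ 0 define ζ^◇_{n,N}({1}^p;z) := Σ_{A⊂{1,…,p}} Σ over tuples (n_1,…,n_{p+1}) of integers in {n+1,…,N} with n_i ≤ n_{i+1} for i ∈ A, n_i < n_{i+1} for i ∈ {1,…,p}\A, and n_{p+1} = N, of (Π_{i∈A} 1/(z−n_i))·(Π_{i∈{1,…,p}\A} 1/n_i), an element of the rational function field ℚ(z), with ζ^◇_{n,N}({1}^0;z) := 1. Then, as an identity of formal power series in t with coefficients in ℚ(z): (Π_{n<j<N}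 (1 + t/j)) · (Π_{n<j≤N} (1 − t/(z−j)))^{−1} = Σ_{p=0}^∞ ζ^◇_{n,N}({1}^p;z)·t^p. -/
open scoped Classical

/-- The value `ζ◇_{n,N}({1}^p; z) ∈ ℚ(z)`: the sum over `A ⊂ {1,…,p}` and tuples
`(n₁,…,n_{p+1})` of integers in `{n+1,…,N}` with `nᵢ ≤ nᵢ₊₁` for `i ∈ A`,
`nᵢ < nᵢ₊₁` for `i ∉ A` and `n_{p+1} = N`, of
`(∏_{i∈A} 1/(z-nᵢ))·(∏_{i∈{1,…,p}∖A} 1/nᵢ)`.  Here `z = RatFunc.X`. -/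
noncomputable def zdiaOnes (N n p : ℕ) : RatFunc ℚ :=
  ∑ A : Finset (Fin p),
    ∑ m ∈ Finset.univ.filter (fun m : Fin (p + 1) → Fin (N + 1) =>
      (∀ i, n < (m i : ℕ)) ∧ ((m (Fin.last p) : ℕ) = N) ∧
      ∀ (i : Fin (p + 1)) (h : (i : ℕ) < p),
        if (⟨(i : ℕ), h⟩ : Fin p) ∈ A then
          (m i : ℕ) ≤ (m ⟨(i : ℕ) + 1, by omega⟩ : ℕ)
        else (m i : ℕ) < (m ⟨(i : ℕ) + 1, by omega⟩ : ℕ)),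
      ∏ i : Fin (p + 1),
        if h : (i : ℕ) < p then
          (if (⟨(i : ℕ), h⟩ : Fin p) ∈ A then
            1 / (RatFunc.X - ((m i : ℕ) : RatFunc ℚ))
          else 1 / ((m i : ℕ) : RatFunc ℚ))
        else 1

noncomputable def stepW (a : Bool) (x y : ℕ) : RatFunc ℚ :=
  if a then (if x ≤ y then 1 / (RatFunc.X - (x : RatFunc ℚ)) else 0)
  else (if x < y then 1 / ((x : ℕ) : RatFunc ℚ) else 0)

noncomputable def GG (N n p : ℕ) : RatFunc ℚ :=
  ∑ a : Fin p → Bool, ∑ m : Fin (p + 1) → Fin (N + 1),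
    (if n < (m 0 : ℕ) ∧ ((m (Fin.last p) : ℕ) = N) then
      ∏ i : Fin p, stepW (a i) (m i.castSucc : ℕ) (m i.succ : ℕ)
    else 0)

def finsetBoolEquiv (p : ℕ) : Finset (Fin p) ≃ (Fin p → Bool) where
  toFun A := fun i => decide (i ∈ A)
  invFun f := Finset.univ.filter (fun i => f i = true)
  left_inv A := by ext i; simp
  right_inv f := by funext i; simp

lemma mono_of_steps {p N : ℕ} (m : Fin (p + 1) → Fin (N + 1)) (A : Finset (Fin p))
    (hQ : ∀ i : Fin p, if i ∈ A then (m i.castSucc : ℕ) ≤ (m i.succ : ℕ)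
      else (m i.castSucc : ℕ) < (m i.succ : ℕ)) :
    ∀ j : Fin (p + 1), (m 0 : ℕ) ≤ (m j : ℕ) := by
  suffices H : ∀ k (hk : k < p + 1), (m 0 : ℕ) ≤ (m ⟨k, hk⟩ : ℕ) by
    intro j; simpa using H j.1 j.2
  intro k
  induction k with
  | zero => intro hk; exact le_refl _
  | succ k ih =>
    intro hk
    have hkp : k < p := by omega
    have hk' : k < p + 1 := by omega
    have h1 := ih hk'
    have h2 := hQ ⟨k, hkp⟩
    have e1 : (⟨k, hkp⟩ : Fin p).castSucc = ⟨k, hk'⟩ := rfl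
    have e2 : (⟨k, hkp⟩ : Fin p).succ = ⟨k + 1, hk⟩ := rfl
    rw [e1, e2] at h2
    split at h2
    · omega
    · omega

lemma zdia_eq_GG (N n p : ℕ) : zdiaOnes N n p = GG N n p := by
  unfold zdiaOnes GG
  rw [← Equiv.sum_comp (finsetBoolEquiv p).symm]
  refine Finset.sum_congr rfl fun a _ => ?_
  set A : Finset (Fin p) := (finsetBoolEquiv p).symm a with hA
  have ha : ∀ i : Fin p, i ∈ A ↔ a i = true := by
    intro i; simp [hA, finsetBoolEquiv]
  rw [Finset.sum_filter]
  refine Finset.sum_congr rfl fun m _ => ?_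
  set Q : Prop := ∀ i : Fin p, if i ∈ A then (m i.castSucc : ℕ) ≤ (m i.succ : ℕ)
      else (m i.castSucc : ℕ) < (m i.succ : ℕ) with hQdef
  have hQiff : (∀ (i : Fin (p + 1)) (h : (i : ℕ) < p),
      if (⟨(i : ℕ), h⟩ : Fin p) ∈ A then
        (m i : ℕ) ≤ (m ⟨(i : ℕ) + 1, by omega⟩ : ℕ)
      else (m i : ℕ) < (m ⟨(i : ℕ) + 1, by omega⟩ : ℕ)) ↔ Q := by
    constructor
    · intro H i
      have h : ((i.castSucc : Fin (p + 1)) : ℕ) < p := i.isLt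
      have := H i.castSucc h
      have e1 : (⟨((i.castSucc : Fin (p + 1)) : ℕ), h⟩ : Fin p) = i := rfl
      have e2 : (⟨((i.castSucc : Fin (p + 1)) : ℕ) + 1, by omega⟩ : Fin (p + 1)) = i.succ := rfl
      rw [e1, e2] at this
      exact this
    · intro H i h
      have := H ⟨(i : ℕ), h⟩
      have e1 : (⟨(i : ℕ), h⟩ : Fin p).castSucc = i := Fin.ext rfl
      have e2 : (⟨(i : ℕ), h⟩ : Fin p).succ = ⟨(i : ℕ) + 1, by omega⟩ := rfl
      rw [e1, e2] at this
      exact this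
  by_cases hQ : Q
  · have hcond : ((∀ i, n < (m i : ℕ)) ∧ ((m (Fin.last p) : ℕ) = N) ∧
        (∀ (i : Fin (p + 1)) (h : (i : ℕ) < p),
          if (⟨(i : ℕ), h⟩ : Fin p) ∈ A then
            (m i : ℕ) ≤ (m ⟨(i : ℕ) + 1, by omega⟩ : ℕ)
          else (m i : ℕ) < (m ⟨(i : ℕ) + 1, by omega⟩ : ℕ)))
        ↔ (n < (m 0 : ℕ) ∧ ((m (Fin.last p) : ℕ) = N)) := by
      constructor
      · rintro ⟨h1, h2, -⟩; exact ⟨h1 0, h2⟩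
      · rintro ⟨h1, h2⟩
        exact ⟨fun i => lt_of_lt_of_le h1 (mono_of_steps m A hQ i), h2, hQiff.mpr hQ⟩
    have hprod : (∏ i : Fin (p + 1),
        if h : (i : ℕ) < p then
          (if (⟨(i : ℕ), h⟩ : Fin p) ∈ A then
            1 / (RatFunc.X - ((m i : ℕ) : RatFunc ℚ))
          else 1 / ((m i : ℕ) : RatFunc ℚ))
        else 1)
        = ∏ i : Fin p, stepW (a i) (m i.castSucc : ℕ) (m i.succ : ℕ) := by
      rw [Fin.prod_univ_castSucc]
      rw [dif_neg (by simp : ¬ ((Fin.last p : ℕ) < p)), mul_one]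
      refine Finset.prod_congr rfl fun i _ => ?_
      have h : ((i.castSucc : Fin (p + 1)) : ℕ) < p := i.isLt
      rw [dif_pos h]
      have e1 : (⟨((i.castSucc : Fin (p + 1)) : ℕ), h⟩ : Fin p) = i := rfl
      rw [e1]
      have hq := hQ i
      by_cases hiA : i ∈ A
      · have hai : a i = true := (ha i).mp hiA
        rw [if_pos hiA] at hq ⊢
        rw [hai]
        simp only [stepW, if_true]
        rw [if_pos hq]
      · have hai : a i = false := by
          rcases Bool.eq_false_or_eq_true (a i) with h' | h'
          · exact absurd ((ha i).mpr h') hiA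
          · exact h'
        rw [if_neg hiA] at hq ⊢
        rw [hai]
        simp only [stepW, Bool.false_eq_true, if_false]
        rw [if_pos hq]
    rw [if_congr hcond hprod rfl]
  · have h1 : ¬ ((∀ i, n < (m i : ℕ)) ∧ ((m (Fin.last p) : ℕ) = N) ∧
        (∀ (i : Fin (p + 1)) (h : (i : ℕ) < p),
          if (⟨(i : ℕ), h⟩ : Fin p) ∈ A then
            (m i : ℕ) ≤ (m ⟨(i : ℕ) + 1, by omega⟩ : ℕ)
          else (m i : ℕ) < (m ⟨(i : ℕ) + 1, by omega⟩ : ℕ))) := by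
      rintro ⟨-, -, h3⟩
      exact hQ (hQiff.mp h3)
    rw [if_neg h1]
    by_cases h2 : (n < (m 0 : ℕ) ∧ ((m (Fin.last p) : ℕ) = N))
    · rw [if_pos h2]
      obtain ⟨i, hi⟩ := not_forall.mp hQ
      refine (Finset.prod_eq_zero (Finset.mem_univ i) ?_).symm
      by_cases hiA : i ∈ A
      · have hai : a i = true := (ha i).mp hiA
        rw [if_pos hiA] at hi
        rw [hai]
        simp only [stepW, if_true]
        rw [if_neg hi]
      · have hai : a i = false := by
          rcases Bool.eq_false_or_eq_true (a i) with h' | h'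
          · exact absurd ((ha i).mpr h') hiA
          · exact h'
        rw [if_neg hiA] at hi
        rw [hai]
        simp only [stepW, Bool.false_eq_true, if_false]
        rw [if_neg hi]
    · rw [if_neg h2]

lemma GG_top (N p : ℕ) : GG N N p = 0 := by
  unfold GG
  refine Finset.sum_eq_zero fun a _ => Finset.sum_eq_zero fun m _ => ?_
  rw [if_neg]
  rintro ⟨h1, -⟩
  exact absurd (m 0).is_le (by omega)

lemma GG_zero (N n : ℕ) (hn : n < N) : GG N n 0 = 1 := by
  unfold GG
  rw [Fintype.sum_unique]
  rw [Fintype.sum_equiv (Equiv.funUnique (Fin 1) (Fin (N + 1)))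
    _ (fun x : Fin (N + 1) => if n < (x : ℕ) ∧ (x : ℕ) = N then 1 else 0)
    (fun m => by simp [Fin.last])]
  have h : ∀ x : Fin (N + 1), (n < (x : ℕ) ∧ (x : ℕ) = N) ↔ x = Fin.last N := by
    intro x
    constructor
    · rintro ⟨-, h2⟩; exact Fin.ext (by simpa using h2)
    · rintro rfl; exact ⟨by simpa using hn, by simp⟩
  simp only [h]
  simp

lemma sum_rot {α β γ M : Type*} [Fintype α] [Fintype β] [Fintype γ]
    [AddCommMonoid M] (f : α → β → γ → M) :
    ∑ x : α, ∑ y : β, ∑ z : γ, f x y z = ∑ z : γ, ∑ y : β, ∑ x : α, f x y z := by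
  refine Finset.sum_comm.trans ?_
  refine (Finset.sum_congr rfl fun y _ => Finset.sum_comm).trans ?_
  exact Finset.sum_comm

lemma GG_expand (N n' q : ℕ) :
    GG N n' (q + 1) =
      ∑ a' : Fin q → Bool, ∑ m' : Fin (q + 1) → Fin (N + 1),
        ∑ m0 : Fin (N + 1), ∑ a0 : Bool,
          (if n' < (m0 : ℕ) ∧ ((m' (Fin.last q) : ℕ) = N) then
            stepW a0 (m0 : ℕ) (m' 0 : ℕ) *
              ∏ i : Fin q, stepW (a' i) (m' i.castSucc : ℕ) (m' i.succ : ℕ)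
          else 0) := by
  unfold GG
  rw [← Equiv.sum_comp (Fin.consEquiv fun _ : Fin (q + 1) => Bool), Fintype.sum_prod_type]
  trans (∑ a0 : Bool, ∑ a' : Fin q → Bool, ∑ m0 : Fin (N + 1),
      ∑ m' : Fin (q + 1) → Fin (N + 1),
        (if n' < (m0 : ℕ) ∧ ((m' (Fin.last q) : ℕ) = N) then
          stepW a0 (m0 : ℕ) (m' 0 : ℕ) *
            ∏ i : Fin q, stepW (a' i) (m' i.castSucc : ℕ) (m' i.succ : ℕ)
        else 0))
  · refine Finset.sum_congr rfl fun a0 _ => Finset.sum_congr rfl fun a' _ => ?_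
    rw [← Equiv.sum_comp (Fin.consEquiv fun _ : Fin (q + 1 + 1) => Fin (N + 1)),
      Fintype.sum_prod_type]
    refine Finset.sum_congr rfl fun m0 _ => Finset.sum_congr rfl fun m' _ => ?_
    simp only [Fin.consEquiv, Equiv.coe_fn_mk, Fin.prod_univ_succ, ← Fin.succ_last,
      ← Fin.succ_castSucc, Fin.castSucc_zero, Fin.cons_zero, Fin.cons_succ]
  · rw [Finset.sum_comm]
    exact Finset.sum_congr rfl fun a' _ => sum_rot _

lemma GG_rec (N n p : ℕ) (hn : n < N) :
    GG N n (p + 1) = GG N (n + 1) (p + 1)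
      + (((n + 1 : ℕ) : RatFunc ℚ))⁻¹ * GG N (n + 1) p
      + (RatFunc.X - ((n + 1 : ℕ) : RatFunc ℚ))⁻¹ * GG N n p := by
  rw [GG_expand, GG_expand]
  conv_rhs => rw [GG, GG]
  rw [Finset.mul_sum, Finset.mul_sum, ← Finset.sum_add_distrib, ← Finset.sum_add_distrib]
  refine Finset.sum_congr rfl fun a' _ => ?_
  rw [Finset.mul_sum, Finset.mul_sum, ← Finset.sum_add_distrib, ← Finset.sum_add_distrib]
  refine Finset.sum_congr rfl fun m' _ => ?_
  set R := ∏ i : Fin p, stepW (a' i) (m' i.castSucc : ℕ) (m' i.succ : ℕ) with hR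
  by_cases hL : ((m' (Fin.last p) : ℕ) = N)
  · simp only [hL, and_true]
    set v : ℕ := (m' 0 : ℕ) with hv
    have hsplit : ∀ (m0 : Fin (N + 1)) (a0 : Bool),
        (if n < (m0 : ℕ) then stepW a0 (m0 : ℕ) v * R else 0)
        = (if n + 1 < (m0 : ℕ) then stepW a0 (m0 : ℕ) v * R else 0)
          + (if m0 = (⟨n + 1, by omega⟩ : Fin (N + 1)) then stepW a0 (m0 : ℕ) v * R
            else 0) := by
      intro m0 a0
      have he : (m0 = (⟨n + 1, by omega⟩ : Fin (N + 1))) ↔ (m0 : ℕ) = n + 1 := by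
        rw [Fin.ext_iff]
      rcases Nat.lt_trichotomy (m0 : ℕ) (n + 1) with h | h | h
      · rw [if_neg (by omega), if_neg (by omega), if_neg (by rw [he]; omega), add_zero]
      · rw [if_pos (by omega), if_neg (by omega), if_pos (by rw [he]; omega), zero_add]
      · rw [if_pos (by omega), if_pos (by omega), if_neg (by rw [he]; omega), add_zero]
    simp only [hsplit, Finset.sum_add_distrib]
    have hthis : ∀ a0 : Bool, (∑ m0 : Fin (N + 1),
        if m0 = (⟨n + 1, by omega⟩ : Fin (N + 1)) then stepW a0 (m0 : ℕ) v * R else 0)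
        = stepW a0 (n + 1) v * R := by
      intro a0
      rw [Finset.sum_ite_eq' Finset.univ (⟨n + 1, by omega⟩ : Fin (N + 1))
        (fun m0 => stepW a0 (m0 : ℕ) v * R)]
      simp
    have hY : (∑ m0 : Fin (N + 1), ∑ a0 : Bool,
        if m0 = (⟨n + 1, by omega⟩ : Fin (N + 1)) then stepW a0 (m0 : ℕ) v * R else 0)
        = (((n + 1 : ℕ) : RatFunc ℚ))⁻¹ * (if n + 1 < v then R else 0)
          + (RatFunc.X - ((n + 1 : ℕ) : RatFunc ℚ))⁻¹ * (if n < v then R else 0) := by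
      rw [Finset.sum_comm, Fintype.sum_bool, hthis true, hthis false]
      have hle : ((n + 1 ≤ v)) ↔ (n < v) := by omega
      simp only [stepW, if_true, Bool.false_eq_true, if_false]
      rw [if_congr hle rfl rfl]
      simp only [mul_ite, ite_mul, zero_mul, mul_zero, one_div]
      rw [add_comm]
    rw [hY]
    ring
  · simp only [hL, and_false, if_false, Finset.sum_const_zero, mul_zero, add_zero]


open PowerSeries in
lemma geom_series (d : RatFunc ℚ) :
    PowerSeries.mk (fun p => d ^ p) * (1 - PowerSeries.C (R := RatFunc ℚ) d * PowerSeries.X) = 1 := by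
  ext p
  rw [mul_one_sub]
  cases p with
  | zero => simp
  | succ p => simp [mul_comm (PowerSeries.C (R := RatFunc ℚ) d), ← mul_assoc, pow_succ, mul_comm d]

open PowerSeries in
lemma step_ps (N n : ℕ) (h : n + 1 < N) :
    (1 - PowerSeries.C (R := RatFunc ℚ) ((RatFunc.X - ((n + 1 : ℕ) : RatFunc ℚ))⁻¹) * PowerSeries.X) *
      PowerSeries.mk (GG N n) =
    (1 + PowerSeries.C (R := RatFunc ℚ) (((n + 1 : ℕ) : RatFunc ℚ))⁻¹ * PowerSeries.X) *
      PowerSeries.mk (GG N (n + 1)) := by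
  ext p
  rw [one_sub_mul, one_add_mul]
  cases p with
  | zero =>
    simp [mul_comm (PowerSeries.C (R := RatFunc ℚ) _), GG_zero N n (by omega),
      GG_zero N (n + 1) h]
  | succ p =>
    simp only [map_sub, map_add, mul_comm (PowerSeries.C (R := RatFunc ℚ) _) PowerSeries.X,
      mul_assoc]
    rw [PowerSeries.coeff_succ_X_mul, PowerSeries.coeff_succ_X_mul]
    simp only [PowerSeries.coeff_C_mul, PowerSeries.coeff_mk]
    have := GG_rec N n p (by omega)
    rw [this]; ring

lemma GG_base (N p : ℕ) (hN : 0 < N) :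
    GG N (N - 1) p = ((RatFunc.X - ((N : ℕ) : RatFunc ℚ))⁻¹) ^ p := by
  induction p with
  | zero => simpa using GG_zero N (N - 1) (by omega)
  | succ p ih =>
    have h1 : N - 1 + 1 = N := by omega
    have := GG_rec N (N - 1) p (by omega)
    rw [this, h1, GG_top, GG_top, ih]
    ring

lemma main' (N : ℕ) : ∀ k n, n < N → N - n = k + 1 →
    PowerSeries.mk (GG N n) *
      (∏ j ∈ Finset.Ioc n N,
        (1 - PowerSeries.C (R := RatFunc ℚ)
            ((RatFunc.X - ((j : ℕ) : RatFunc ℚ))⁻¹) * PowerSeries.X)) =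
    (∏ j ∈ Finset.Ioo n N,
        (1 + PowerSeries.C (R := RatFunc ℚ) (((j : ℕ) : RatFunc ℚ))⁻¹ * PowerSeries.X)) := by
  intro k
  induction k with
  | zero =>
    intro n hn hk
    have hN : N = n + 1 := by omega
    subst hN
    rw [show Finset.Ioc n (n + 1) = {n + 1} by
        ext x; simp only [Finset.mem_Ioc, Finset.mem_singleton]; omega,
      show Finset.Ioo n (n + 1) = ∅ by
        ext x; simp only [Finset.mem_Ioo, Finset.notMem_empty, iff_false]; omega]
    simp only [Finset.prod_singleton, Finset.prod_empty]
    have : GG (n + 1) n = fun p => ((RatFunc.X - ((n + 1 : ℕ) : RatFunc ℚ))⁻¹) ^ p := by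
      funext p
      simpa using GG_base (n + 1) p (by omega)
    rw [this]
    exact geom_series _
  | succ k ih =>
    intro n hn hk
    have h1 : n + 1 < N := by omega
    rw [show Finset.Ioc n N = insert (n + 1) (Finset.Ioc (n + 1) N) by ext x; simp; omega,
      show Finset.Ioo n N = insert (n + 1) (Finset.Ioo (n + 1) N) by ext x; simp; omega,
      Finset.prod_insert (by simp), Finset.prod_insert (by simp)]
    have key := step_ps N n h1
    have ihs := ih (n + 1) h1 (by omega)
    calc PowerSeries.mk (GG N n) *
        ((1 - PowerSeries.C (R := RatFunc ℚ)
            ((RatFunc.X - ((n + 1 : ℕ) : RatFunc ℚ))⁻¹) * PowerSeries.X) *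
          ∏ j ∈ Finset.Ioc (n + 1) N,
            (1 - PowerSeries.C (R := RatFunc ℚ)
              ((RatFunc.X - ((j : ℕ) : RatFunc ℚ))⁻¹) * PowerSeries.X))
        = ((1 - PowerSeries.C (R := RatFunc ℚ)
            ((RatFunc.X - ((n + 1 : ℕ) : RatFunc ℚ))⁻¹) * PowerSeries.X) *
            PowerSeries.mk (GG N n)) *
          ∏ j ∈ Finset.Ioc (n + 1) N,
            (1 - PowerSeries.C (R := RatFunc ℚ)
              ((RatFunc.X - ((j : ℕ) : RatFunc ℚ))⁻¹) * PowerSeries.X) := by ring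
      _ = (1 + PowerSeries.C (R := RatFunc ℚ) (((n + 1 : ℕ) : RatFunc ℚ))⁻¹ * PowerSeries.X) *
          (PowerSeries.mk (GG N (n + 1)) *
          ∏ j ∈ Finset.Ioc (n + 1) N,
            (1 - PowerSeries.C (R := RatFunc ℚ)
              ((RatFunc.X - ((j : ℕ) : RatFunc ℚ))⁻¹) * PowerSeries.X)) := by
            rw [key]; ring
      _ = _ := by rw [ihs]

/-- **Generating series of `ζ◇_{n,N}({1}^p; z)`.**  For `0 ≤ n ≤ N-1`, as an identity
of formal power series in `t` over the field `ℚ(z)`: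
`(∏_{n<j<N} (1+t/j)) · (∏_{n<j≤N} (1-t/(z-j)))⁻¹ = ∑_{p≥0} ζ◇_{n,N}({1}^p;z) t^p`. -/
theorem ones_generating_series (N : ℕ) (hNpos : 0 < N) (n : ℕ) (hn : n < N) :
    (∏ j ∈ Finset.Ioo n N,
        (1 + PowerSeries.C (R := RatFunc ℚ) (((j : ℕ) : RatFunc ℚ))⁻¹ * PowerSeries.X)) *
      (∏ j ∈ Finset.Ioc n N,
        (1 - PowerSeries.C (R := RatFunc ℚ)
            ((RatFunc.X - ((j : ℕ) : RatFunc ℚ))⁻¹) * PowerSeries.X))⁻¹ =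
    PowerSeries.mk (fun p => zdiaOnes N n p) := by
  have hmk : PowerSeries.mk (fun p => zdiaOnes N n p) = PowerSeries.mk (GG N n) := by
    have h : (fun p => zdiaOnes N n p) = GG N n := funext fun p => zdia_eq_GG N n p
    rw [h]
  have hM := main' N (N - n - 1) n hn (by omega)
  have hC : (PowerSeries.constantCoeff (R := RatFunc ℚ))
      (∏ j ∈ Finset.Ioc n N,
        (1 - PowerSeries.C (R := RatFunc ℚ)
            ((RatFunc.X - ((j : ℕ) : RatFunc ℚ))⁻¹) * PowerSeries.X)) ≠ 0 := by
    rw [map_prod]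
    have : ∀ j ∈ Finset.Ioc n N, (PowerSeries.constantCoeff (R := RatFunc ℚ))
        (1 - PowerSeries.C (R := RatFunc ℚ)
            ((RatFunc.X - ((j : ℕ) : RatFunc ℚ))⁻¹) * PowerSeries.X) = 1 := by
      intro j _; simp
    rw [Finset.prod_congr rfl this]
    simp
  rw [hmk, ← hM, mul_assoc, PowerSeries.mul_inv_cancel _ hC, mul_one]
end
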